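/- Let S ∈ 𝔖 be nonempty with canonical form S₁⋯S_r, and set S_{r+1} = ∅ with Supp S_{r+1} = ∅. Then: (a) S = ⋁_{(h,v)} S_{h,v} (join up to ∼), where the join is over all pairs (h,v) with 0 < h ≤ r and v a minimal element of Supp S_h \ H_Λ(Supp S_{h+1}) in the poset (Γ₀,Λ); (b) if S = T₁ ∨ ⋯ ∨ T_l with every T_i ∈ 𝔓, then for each pair (h,v) as in (a) there exists an index i with S_{h,v} ∼ T_i; (c) there exist T₁,…,T_l ∈ 𝔓 with S = T₁ ∨ ⋯ ∨ T_l, and if l is the smallest possible and S = U₁ ∨ ⋯ ∨ U_l with all U_i ∈ 𝔓, then after reindexing T_i ∼ U_i for all i. -/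

import Mathlib

namespace KP

/-! ## Quivers on a fixed vertex set `Fin n`.

An orientation is encoded by `Λ : Fin n → Fin n → ℕ`, where `Λ a b` is the number of
arrows from `a` to `b`.  The underlying graph is recorded by `edges Λ a b = Λ a b + Λ b a`. -/

/-- The orientation `σ_x Λ` obtained by reversing every arrow incident with `x`. -/
def flipO {n : ℕ} (x : Fin n) (Λ : Fin n → Fin n → ℕ) : Fin n → Fin n → ℕ :=
  fun a b => if a = x ∨ b = x then Λ b a else Λ a b

/-- Number of edges of the underlying graph joining `a` and `b`. -/
def edges {n : ℕ} (Λ : Fin n → Fin n → ℕ) (a b : Fin n) : ℕ := Λ a b + Λ b a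

/-- `x` is a sink: no arrow starts at `x`. -/
def IsSink {n : ℕ} (Λ : Fin n → Fin n → ℕ) (x : Fin n) : Prop := ∀ y, Λ x y = 0

/-- `S` is a `(+)`-admissible sequence of vertices on `(Γ, Λ)`. -/
def Admissible {n : ℕ} (Λ : Fin n → Fin n → ℕ) : List (Fin n) → Prop
  | [] => True
  | x :: xs => IsSink Λ x ∧ Admissible (flipO x Λ) xs

/-- The orientation `Λ^S`. -/
def orientAfter {n : ℕ} (Λ : Fin n → Fin n → ℕ) : List (Fin n) → (Fin n → Fin n → ℕ)
  | [] => Λ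
  | x :: xs => orientAfter (flipO x Λ) xs

/-- Elementary move: interchange two consecutive vertices not joined by an edge. -/
inductive SwapRel {n : ℕ} (E : Fin n → Fin n → ℕ) : List (Fin n) → List (Fin n) → Prop
  | swap (l₁ l₂ : List (Fin n)) (a b : Fin n) (h : E a b = 0) :
      SwapRel E (l₁ ++ a :: b :: l₂) (l₁ ++ b :: a :: l₂)

/-- The equivalence `∼` on sequences of vertices: reflexive–transitive closure of the
(symmetric) relation `SwapRel`. -/
def Sim {n : ℕ} (E : Fin n → Fin n → ℕ) : List (Fin n) → List (Fin n) → Prop :=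
  Relation.ReflTransGen (SwapRel E)

/-- The preorder `S ⪯ T` : `T ∼ S ++ U` for some `(+)`-admissible sequence `U` on `(Γ, Λ^S)`. -/
def Preceq {n : ℕ} (Λ : Fin n → Fin n → ℕ) (S T : List (Fin n)) : Prop :=
  ∃ U, Admissible (orientAfter Λ S) U ∧ Sim (edges Λ) T (S ++ U)

/-- Support of a sequence of vertices. -/
def suppOf {n : ℕ} (S : List (Fin n)) : Set (Fin n) := {v | v ∈ S}

/-- The partial order on vertices: `x ≤ y` iff there is a path from `x` to `y` in `(Γ, Λ)`. -/
def PathLE {n : ℕ} (Λ : Fin n → Fin n → ℕ) (x y : Fin n) : Prop :=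
  Relation.ReflTransGen (fun a b => Λ a b ≠ 0) x y

/-- A filter (up-closed set) of the poset `(Γ₀, Λ)`. -/
def IsFilter {n : ℕ} (Λ : Fin n → Fin n → ℕ) (F : Set (Fin n)) : Prop :=
  ∀ x ∈ F, ∀ y, PathLE Λ x y → y ∈ F

/-- The principal filter `⟨x⟩`. -/
def upSet {n : ℕ} (Λ : Fin n → Fin n → ℕ) (x : Fin n) : Set (Fin n) := {y | PathLE Λ x y}

/-- The hull `H_Λ(F)`: the smallest filter containing `F` and every vertex joined
by an edge to a vertex of `F`. -/
def hull {n : ℕ} (Λ : Fin n → Fin n → ℕ) (F : Set (Fin n)) : Set (Fin n) :=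
  {y | ∃ x, (x ∈ F ∨ ∃ z ∈ F, edges Λ z x ≠ 0) ∧ PathLE Λ x y}

/-- `segs` is a canonical form of `S` (Proposition 2.1): `S ∼ S₁S₂⋯S_r`, each segment
consists of distinct vertices, is nonempty, and `Supp S_i = Supp (S_i S_{i+1} ⋯ S_r)`. -/
def Segments {n : ℕ} (Λ : Fin n → Fin n → ℕ) (S : List (Fin n))
    (segs : List (List (Fin n))) : Prop :=
  Admissible Λ segs.flatten ∧ Sim (edges Λ) S segs.flatten ∧
  (∀ seg ∈ segs, seg ≠ [] ∧ seg.Nodup) ∧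
  ∀ i, i < segs.length → suppOf (segs.getD i []) = suppOf ((segs.drop i).flatten)

/-- `J` is (a representative of) the join `S ∨ T` (Definition 2.4):  the canonical form of `J`
has `Supp R_i = Supp S_i ∪ Supp T_i` (out-of-range segments read as `∅`). -/
def IsJoin {n : ℕ} (Λ : Fin n → Fin n → ℕ) (S T J : List (Fin n)) : Prop :=
  ∃ CS CT CJ, Segments Λ S CS ∧ Segments Λ T CT ∧ Segments Λ J CJ ∧
    ∀ i, suppOf (CJ.getD i []) = suppOf (CS.getD i []) ∪ suppOf (CT.getD i [])

/-- `M` is (a representative of) the meet `S ∧ T` (Definition 2.4). -/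
def IsMeet {n : ℕ} (Λ : Fin n → Fin n → ℕ) (S T M : List (Fin n)) : Prop :=
  ∃ CS CT CM, Segments Λ S CS ∧ Segments Λ T CT ∧ Segments Λ M CM ∧
    ∀ i, suppOf (CM.getD i []) = suppOf (CS.getD i []) ∩ suppOf (CT.getD i [])

/-- `S` is (equivalent to) the join `T₁ ∨ ⋯ ∨ T_l` of the list of sequences `Ts`. -/
def IsJoinList {n : ℕ} (Λ : Fin n → Fin n → ℕ) : List (List (Fin n)) → List (Fin n) → Prop
  | [], S => S = []
  | T :: Ts, S => ∃ J, IsJoinList Λ Ts J ∧ IsJoin Λ T J S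

/-- The segments of a canonical form of a principal sequence `S_{r,x}` (Definition 3.1). -/
def PrincipalSegs {n : ℕ} (Λ : Fin n → Fin n → ℕ) (segs : List (List (Fin n)))
    (r : ℕ) (x : Fin n) : Prop :=
  segs.length = r ∧ 0 < r ∧
  (∀ i, i + 1 < r → suppOf (segs.getD i []) = hull Λ (suppOf (segs.getD (i+1) []))) ∧
  suppOf (segs.getD (r-1) []) = upSet Λ x

/-- `S ∼ S_{r,x}`, the principal `(+)`-admissible sequence of size `r` with
`Supp S_r = ⟨x⟩`. -/
def IsPrincipalSeq {n : ℕ} (Λ : Fin n → Fin n → ℕ) (r : ℕ) (x : Fin n)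
    (S : List (Fin n)) : Prop :=
  ∃ segs, Segments Λ S segs ∧ PrincipalSegs Λ segs r x

/-- `S` is a principal `(+)`-admissible sequence. -/
def IsPrincipal {n : ℕ} (Λ : Fin n → Fin n → ℕ) (S : List (Fin n)) : Prop :=
  ∃ r x, IsPrincipalSeq Λ r x S


/-! ## Representations of `(Γ, Λ)` over a field `k`. -/

/-- A (finite-dimensional) representation of the quiver `(Γ, Λ)` over `k`:
the space at vertex `x` is `Fin (d x) → k`, and each arrow carries a linear map. -/
structure Rep (k : Type) [Field k] (n : ℕ) (Λ : Fin n → Fin n → ℕ) where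
  d : Fin n → ℕ
  f : ∀ a b : Fin n, Fin (Λ a b) → ((Fin (d a) → k) →ₗ[k] (Fin (d b) → k))

variable {k : Type} [Field k] {n : ℕ}

/-- A morphism of representations. -/
structure RepHom {Λ : Fin n → Fin n → ℕ} (M N : Rep k n Λ) where
  g : ∀ x, (Fin (M.d x) → k) →ₗ[k] (Fin (N.d x) → k)
  comm : ∀ a b i v, g b (M.f a b i v) = N.f a b i (g a v)

/-- Isomorphism of representations. -/
def RepIso {Λ : Fin n → Fin n → ℕ} (M N : Rep k n Λ) : Prop :=
  ∃ g : ∀ x, (Fin (M.d x) → k) ≃ₗ[k] (Fin (N.d x) → k),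
    ∀ a b i v, g b (M.f a b i v) = N.f a b i (g a v)

/-- The zero representation. -/
def IsZeroRep {Λ : Fin n → Fin n → ℕ} (M : Rep k n Λ) : Prop := ∀ x, M.d x = 0

/-- Cast between the standard spaces. -/
def castL (k : Type) [Field k] {m m' : ℕ} (h : m = m') : (Fin m → k) ≃ₗ[k] (Fin m' → k) :=
  LinearEquiv.funCongrLeft k k (finCongr h.symm)

/-- The splitting `(Fin (m + p) → k) ≃ₗ (Fin m → k) × (Fin p → k)`. -/
def splitL (k : Type) [Field k] (m p : ℕ) : (Fin (m + p) → k) ≃ₗ[k] (Fin m → k) × (Fin p → k) :=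
  (LinearEquiv.funCongrLeft k k finSumFinEquiv).trans
    (LinearEquiv.sumArrowLequivProdArrow _ _ k k)

/-- Direct sum of two representations. -/
def dSum {Λ : Fin n → Fin n → ℕ} (M N : Rep k n Λ) : Rep k n Λ where
  d x := M.d x + N.d x
  f a b i :=
    (splitL k (M.d b) (N.d b)).symm.toLinearMap ∘ₗ
      (LinearMap.prodMap (M.f a b i) (N.f a b i)) ∘ₗ (splitL k (M.d a) (N.d a)).toLinearMap

/-- The zero representation (as an object). -/
def zeroRep (k : Type) [Field k] (n : ℕ) (Λ : Fin n → Fin n → ℕ) : Rep k n Λ where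
  d _ := 0
  f _ _ _ := 0

/-- Direct sum of a list of representations. -/
def dSumList {Λ : Fin n → Fin n → ℕ} (L : List (Rep k n Λ)) : Rep k n Λ :=
  L.foldr dSum (zeroRep k n Λ)

/-- `M` is indecomposable. -/
def Indecomp {Λ : Fin n → Fin n → ℕ} (M : Rep k n Λ) : Prop :=
  ¬ IsZeroRep M ∧ ∀ A B : Rep k n Λ, RepIso M (dSum A B) → IsZeroRep A ∨ IsZeroRep B

/-- `X` is a direct summand of `M`. -/
def IsSummand {Λ : Fin n → Fin n → ℕ} (X M : Rep k n Λ) : Prop :=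
  ∃ Y, RepIso M (dSum X Y)

/-! ### Reflection functors (on objects) -/

/-- Index type of the arrows ending at `x`. -/
abbrev Arin {n : ℕ} (Λ : Fin n → Fin n → ℕ) (x : Fin n) := Σ y : Fin n, Fin (Λ y x)

/-- Index type of the arrows starting at `x`. -/
abbrev Aout {n : ℕ} (Λ : Fin n → Fin n → ℕ) (x : Fin n) := Σ y : Fin n, Fin (Λ x y)

/-- The map `h : ⊕_{a : y → x} V(y) → V(x)` induced by the maps along the arrows ending at `x`. -/
noncomputable def inMap (Λ : Fin n → Fin n → ℕ) (M : Rep k n Λ) (x : Fin n) :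
    ((p : Arin Λ x) → (Fin (M.d p.1) → k)) →ₗ[k] (Fin (M.d x) → k) :=
  ∑ p : Arin Λ x, (M.f p.1 x p.2) ∘ₗ LinearMap.proj p

/-- The map `h' : V(x) → ⊕_{a : x → y} V(y)` induced by the maps along arrows starting at `x`. -/
def outMap (Λ : Fin n → Fin n → ℕ) (M : Rep k n Λ) (x : Fin n) :
    (Fin (M.d x) → k) →ₗ[k] ((p : Aout Λ x) → (Fin (M.d p.1) → k)) :=
  LinearMap.pi fun p => M.f x p.1 p.2

noncomputable def kerEquiv (Λ : Fin n → Fin n → ℕ) (M : Rep k n Λ) (x : Fin n) :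
    LinearMap.ker (inMap Λ M x) ≃ₗ[k]
      (Fin (Module.finrank k (LinearMap.ker (inMap Λ M x))) → k) :=
  (Module.finBasis k _).equivFun

noncomputable def cokerEquiv (Λ : Fin n → Fin n → ℕ) (M : Rep k n Λ) (x : Fin n) :
    (((p : Aout Λ x) → (Fin (M.d p.1) → k)) ⧸ LinearMap.range (outMap Λ M x)) ≃ₗ[k]
      (Fin (Module.finrank k (((p : Aout Λ x) → (Fin (M.d p.1) → k)) ⧸
        LinearMap.range (outMap Λ M x))) → k) :=
  (Module.finBasis k _).equivFun

/-- The positive reflection functor `F_x⁺` (on objects): the space at `x` is replaced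
by the kernel of `inMap`, with the maps along the reversed arrows induced by inclusion
followed by the projections. -/
noncomputable def reflPlus (x : Fin n) (Λ : Fin n → Fin n → ℕ) (M : Rep k n Λ) :
    Rep k n (flipO x Λ) where
  d z := if z = x then Module.finrank k (LinearMap.ker (inMap Λ M x)) else M.d z
  f a b i :=
    if ha : a = x then
      if hb : b = x then 0
      else
        (castL k (if_neg hb).symm).toLinearMap ∘ₗ
          (LinearMap.proj (φ := fun p : Arin Λ x => Fin (M.d p.1) → k)
            (⟨b, Fin.cast (by subst ha; simp [flipO]) i⟩ : Arin Λ x)) ∘ₗ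
          (LinearMap.ker (inMap Λ M x)).subtype ∘ₗ
          (kerEquiv Λ M x).symm.toLinearMap ∘ₗ (castL k (if_pos ha)).toLinearMap
    else
      if hb : b = x then 0
      else
        (castL k (if_neg hb).symm).toLinearMap ∘ₗ
          M.f a b (Fin.cast (by simp [flipO, ha, hb]) i) ∘ₗ
          (castL k (if_neg ha)).toLinearMap

/-- The negative reflection functor `F_x⁻` (on objects), presented as a map from
representations of `(Γ, σ_x Λ)` to representations of `(Γ, Λ)`: the space at `x` is
replaced by the cokernel of `outMap`. -/
noncomputable def reflMinus (x : Fin n) (Λ : Fin n → Fin n → ℕ)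
    (N : Rep k n (flipO x Λ)) : Rep k n Λ where
  d z := if z = x then
      Module.finrank k (((p : Aout (flipO x Λ) x) → (Fin (N.d p.1) → k)) ⧸
        LinearMap.range (outMap (flipO x Λ) N x))
    else N.d z
  f a b i :=
    if hb : b = x then
      if ha : a = x then 0
      else
        (castL k (if_pos hb).symm).toLinearMap ∘ₗ
          (cokerEquiv (flipO x Λ) N x).toLinearMap ∘ₗ
          (LinearMap.range (outMap (flipO x Λ) N x)).mkQ ∘ₗ
          (LinearMap.single k (fun p : Aout (flipO x Λ) x => Fin (N.d p.1) → k)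
            (⟨a, Fin.cast (by subst hb; simp [flipO]) i⟩ : Aout (flipO x Λ) x)) ∘ₗ
          (castL k (if_neg ha)).toLinearMap
    else
      if ha : a = x then 0
      else
        (castL k (if_neg hb).symm).toLinearMap ∘ₗ
          N.f a b (Fin.cast (by simp [flipO, ha, hb]) i) ∘ₗ
          (castL k (if_neg ha)).toLinearMap

/-- `F(S) = F_{x_s}⁺ ⋯ F_{x_1}⁺` applied to a representation. -/
noncomputable def FList : (S : List (Fin n)) → (Λ : Fin n → Fin n → ℕ) → Rep k n Λ →
    Rep k n (orientAfter Λ S)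
  | [], _, M => M
  | x :: xs, Λ, M => FList xs (flipO x Λ) (reflPlus x Λ M)

/-- `S` annihilates `M` : `F(S) M = 0`. -/
def Annihilates (Λ : Fin n → Fin n → ℕ) (S : List (Fin n)) (M : Rep k n Λ) : Prop :=
  IsZeroRep (FList S Λ M)

/-- `M` is preprojective: some `(+)`-admissible sequence annihilates it. -/
def Preprojective (Λ : Fin n → Fin n → ℕ) (M : Rep k n Λ) : Prop :=
  ∃ S, Admissible Λ S ∧ Annihilates Λ S M

/-- `S` is a shortest `(+)`-admissible sequence annihilating `M` : it annihilates `M` and no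
proper subsequence of `S` annihilates `M`.  (This predicate is invariant under `∼`, so it
expresses `S ∼ S_M`.) -/
def IsShortestAnn (Λ : Fin n → Fin n → ℕ) (M : Rep k n Λ) (S : List (Fin n)) : Prop :=
  Admissible Λ S ∧ Annihilates Λ S M ∧
  ∀ S', Admissible Λ S' → Annihilates Λ S' M → Preceq Λ S' S → Sim (edges Λ) S' S

/-- The simple representation `L_x` concentrated at the vertex `x`. -/
def simpleRep (Λ : Fin n → Fin n → ℕ) (x : Fin n) : Rep k n Λ where
  d z := if z = x then 1 else 0
  f _ _ _ := 0

/-- `M(S) = F_{x₁}⁻ F_{x₂}⁻ ⋯ F_{x_{s-1}}⁻ (L_{x_s})`, where `L_{x_s}` is the simple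
(projective) module over `k(Γ, σ_{x_{s-1}} ⋯ σ_{x_1} Λ)` at the vertex `x_s`. -/
noncomputable def Mof : (Λ : Fin n → Fin n → ℕ) → (S : List (Fin n)) → Rep k n Λ
  | Λ, [] => zeroRep k n Λ
  | Λ, [x] => simpleRep Λ x
  | Λ, x :: y :: ys => reflMinus x Λ (Mof (flipO x Λ) (y :: ys))

variable {n : ℕ}

/-! ## The Weyl group -/

/-- The simple reflection `σ_i` attached to a generalized Cartan matrix `A`,
as a linear endomorphism of `ℤⁿ` : `σ_i(v) = v - (∑ l, a_{il} v_l) e_i`. -/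
def sigmaL (A : Fin n → Fin n → ℤ) (i : Fin n) : (Fin n → ℤ) →ₗ[ℤ] (Fin n → ℤ) where
  toFun v := v - (∑ l, A i l * v l) • Pi.single i 1
  map_add' v w := by
    simp only [Pi.add_apply, mul_add, Finset.sum_add_distrib, add_smul]
    abel
  map_smul' c v := by
    simp only [Pi.smul_apply, smul_eq_mul, RingHom.id_apply, smul_sub]
    congr 1
    rw [smul_smul, Finset.mul_sum]
    congr 1
    exact Finset.sum_congr rfl fun l _ => by ring

theorem sigma_invol (A : Fin n → Fin n → ℤ) (hA : ∀ i, A i i = 2) (i : Fin n) :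
    (sigmaL A i).comp (sigmaL A i) = LinearMap.id := by
  apply LinearMap.ext
  intro v
  simp only [LinearMap.comp_apply, LinearMap.id_apply, sigmaL, LinearMap.coe_mk, AddHom.coe_mk]
  set c := ∑ l, A i l * v l with hc
  set s : Fin n → ℤ := Pi.single i 1 with hs
  have h1 : ∑ l, A i l * (v - c • s) l = -c := by
    have h2 : ∀ l, A i l * (v - c • s) l = A i l * v l - c * (A i l * s l) := fun l => by
      simp only [Pi.sub_apply, Pi.smul_apply, smul_eq_mul]
      ring
    rw [Finset.sum_congr rfl fun l _ => h2 l, Finset.sum_sub_distrib, ← Finset.mul_sum]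
    have h3 : ∑ l, A i l * s l = 2 := by
      rw [Finset.sum_eq_single i]
      · simp [hs, hA i]
      · intro b _ hb
        simp [hs, Pi.single_eq_of_ne hb]
      · simp
    rw [h3, ← hc]
    ring
  rw [h1]
  ext j
  simp only [Pi.sub_apply, Pi.smul_apply, smul_eq_mul]
  ring

/-- The simple reflection `σ_i` as an automorphism of `ℤⁿ`. -/
def sigmaE (A : Fin n → Fin n → ℤ) (hA : ∀ i, A i i = 2) (i : Fin n) :
    (Fin n → ℤ) ≃ₗ[ℤ] (Fin n → ℤ) :=
  LinearEquiv.ofLinear (sigmaL A i) (sigmaL A i) (sigma_invol A hA i) (sigma_invol A hA i)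

/-- The length `ℓ(w)`: the least `l ≥ 0` such that `w` is a product of `l` simple
reflections. -/
noncomputable def wordLen (A : Fin n → Fin n → ℤ) (hA : ∀ i, A i i = 2)
    (w : (Fin n → ℤ) ≃ₗ[ℤ] (Fin n → ℤ)) : ℕ :=
  sInf {l | ∃ ys : List (Fin n), ys.length = l ∧ w = (ys.map (sigmaE A hA)).prod}

/-- The word `w(S) = σ_{x_s} ⋯ σ_{x_1}` associated to a sequence `S = x₁, …, x_s`. -/
def wordOf (A : Fin n → Fin n → ℤ) (hA : ∀ i, A i i = 2) (S : List (Fin n)) :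
    (Fin n → ℤ) ≃ₗ[ℤ] (Fin n → ℤ) :=
  ((S.reverse).map (sigmaE A hA)).prod

/-- The symmetric generalized Cartan matrix of the underlying graph of `(Γ, Λ)`. -/
def cartanOf (Λ : Fin n → Fin n → ℕ) : Fin n → Fin n → ℤ :=
  fun i j => if i = j then 2 else -(edges Λ i j : ℤ)

theorem cartan_diag (Λ : Fin n → Fin n → ℕ) : ∀ i, cartanOf Λ i i = 2 := by
  intro i; simp [cartanOf]

/-- The simple reflections of the Weyl group of the underlying graph of `(Γ, Λ)`. -/
def wSig (Λ : Fin n → Fin n → ℕ) : Fin n → ((Fin n → ℤ) ≃ₗ[ℤ] (Fin n → ℤ)) :=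
  sigmaE (cartanOf Λ) (cartan_diag Λ)

/-- `w(S)` for a sequence of vertices of `(Γ, Λ)`. -/
def wordOfSeq (Λ : Fin n → Fin n → ℕ) (S : List (Fin n)) :
    (Fin n → ℤ) ≃ₗ[ℤ] (Fin n → ℤ) :=
  ((S.reverse).map (wSig Λ)).prod

/-- The word `w(S)` is reduced: `ℓ(w(S))` equals the number of letters of `S`. -/
noncomputable def IsReducedSeq (Λ : Fin n → Fin n → ℕ) (S : List (Fin n)) : Prop :=
  wordLen (cartanOf Λ) (cartan_diag Λ) (wordOfSeq Λ S) = S.length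

/-! ## Dynkin graphs of types A, D, E -/

def edgeA (n : ℕ) : Fin n → Fin n → ℕ := fun i j =>
  if (i : ℕ) + 1 = (j : ℕ) ∨ (j : ℕ) + 1 = (i : ℕ) then 1 else 0

def edgeD (n : ℕ) : Fin n → Fin n → ℕ := fun i j =>
  if ((i : ℕ) = 0 ∧ (j : ℕ) = 2) ∨ ((j : ℕ) = 0 ∧ (i : ℕ) = 2) ∨
     ((i : ℕ) = 1 ∧ (j : ℕ) = 2) ∨ ((j : ℕ) = 1 ∧ (i : ℕ) = 2) ∨
     (2 ≤ (i : ℕ) ∧ (i : ℕ) + 1 = (j : ℕ)) ∨ (2 ≤ (j : ℕ) ∧ (j : ℕ) + 1 = (i : ℕ))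
  then 1 else 0

def edgeE (n : ℕ) : Fin n → Fin n → ℕ := fun i j =>
  if ((i : ℕ) + 1 = (j : ℕ) ∧ (j : ℕ) ≤ n - 2) ∨ ((j : ℕ) + 1 = (i : ℕ) ∧ (i : ℕ) ≤ n - 2) ∨
     ((i : ℕ) = 2 ∧ (j : ℕ) = n - 1) ∨ ((j : ℕ) = 2 ∧ (i : ℕ) = n - 1)
  then 1 else 0

/-- The underlying graph (given by its edge-count function `E`) is a Dynkin diagram of
type `A`, `D`, or `E`. -/
def IsDynkinADE (n : ℕ) (E : Fin n → Fin n → ℕ) : Prop :=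
  ∃ e : Fin n ≃ Fin n,
    (∀ i j, E i j = edgeA n (e i) (e j)) ∨
    (4 ≤ n ∧ ∀ i j, E i j = edgeD n (e i) (e j)) ∨
    ((n = 6 ∨ n = 7 ∨ n = 8) ∧ ∀ i j, E i j = edgeE n (e i) (e j))

/-! ## Coxeter-sortable elements -/

/-- Lexicographic comparison of index tuples. -/
def lexLE {s : ℕ} (ι ι' : Fin s → ℕ) : Prop :=
  ι = ι' ∨ ∃ j, (∀ j', j' < j → ι j' = ι' j') ∧ ι j < ι' j

/-- `w` is `c`-sortable for the Coxeter element determined by the half-infinite word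
`cseq` (with dividers every `blockLen` letters): the lexicographically first subsequence
of `cseq` that is a reduced word for `w` defines a sequence of subsets (between adjacent
dividers) that is decreasing under inclusion. -/
def CSortable (A : Fin n → Fin n → ℤ) (hA : ∀ i, A i i = 2) (cseq : ℕ → Fin n)
    (blockLen : ℕ) (w : (Fin n → ℤ) ≃ₗ[ℤ] (Fin n → ℤ)) : Prop :=
  ∃ (s : ℕ) (ι : Fin s → ℕ), StrictMono ι ∧
    w = ((List.ofFn fun j => cseq (ι j)).map (sigmaE A hA)).prod ∧
    wordLen A hA w = s ∧
    (∀ ι' : Fin s → ℕ, StrictMono ι' →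
      w = ((List.ofFn fun j => cseq (ι' j)).map (sigmaE A hA)).prod → lexLE ι ι') ∧
    ∀ m : ℕ, {a : Fin n | ∃ j, (ι j) / blockLen = m + 1 ∧ cseq (ι j) = a} ⊆
             {a : Fin n | ∃ j, (ι j) / blockLen = m ∧ cseq (ι j) = a}


/-- A nonzero non-isomorphism between representations. -/
def RepStep {k : Type} [Field k] {n : ℕ} {Λ : Fin n → Fin n → ℕ} (X Y : Rep k n Λ) : Prop :=
  ∃ f : RepHom X Y, (∃ x v, f.g x v ≠ 0) ∧ ¬ ∀ x, Function.Bijective (f.g x)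

/-- `v` is a minimal element of `D` in the poset `(Γ₀, Λ)`. -/
def MinimalIn {n : ℕ} (Λ : Fin n → Fin n → ℕ) (D : Set (Fin n)) (v : Fin n) : Prop :=
  v ∈ D ∧ ∀ u ∈ D, PathLE Λ u v → u = v

/-- The pairs `(h, v)` of Proposition 3.2(a): `0 < h ≤ r` and `v` a minimal element of
`Supp S_h \ H_Λ(Supp S_{h+1})` (with `Supp S_{r+1} = ∅`). -/
def JoinPair {n : ℕ} (Λ : Fin n → Fin n → ℕ) (segs : List (List (Fin n)))
    (p : ℕ × Fin n) : Prop :=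
  0 < p.1 ∧ p.1 ≤ segs.length ∧
  MinimalIn Λ (suppOf (segs.getD (p.1 - 1) []) \ hull Λ (suppOf (segs.getD p.1 []))) p.2
theorem edges_comm {n : ℕ} (Λ : Fin n → Fin n → ℕ) (a b : Fin n) : edges Λ a b = edges Λ b a :=
  Nat.add_comm _ _

theorem edges_flipO {n : ℕ} (x : Fin n) (Λ : Fin n → Fin n → ℕ) (a b : Fin n) :
    edges (flipO x Λ) a b = edges Λ a b := by
  unfold edges flipO
  by_cases h : a = x ∨ b = x
  · rw [if_pos h, if_pos (Or.symm h)]; omega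
  · rw [if_neg h, if_neg (fun hh => h (Or.symm hh))]

theorem flipO_comm {n : ℕ} (x y : Fin n) (Λ : Fin n → Fin n → ℕ) :
    flipO x (flipO y Λ) = flipO y (flipO x Λ) := by
  funext a b
  unfold flipO
  by_cases hax : a = x <;> by_cases hbx : b = x <;> by_cases hay : a = y <;>
    by_cases hby : b = y <;> simp_all

theorem orientAfter_parity {n : ℕ} (L : List (Fin n)) :
    ∀ (Λ : Fin n → Fin n → ℕ) (a b : Fin n),
    orientAfter Λ L a b = if Even (L.count a + L.count b) then Λ a b else Λ b a := by
  induction L with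
  | nil => intro Λ a b; simp [orientAfter]
  | cons x xs ih =>
    intro Λ a b
    show orientAfter (flipO x Λ) xs a b = _
    rw [ih]
    rcases eq_or_ne a b with rfl | hab
    · have h1 : flipO x Λ a a = Λ a a := by unfold flipO; split <;> rfl
      rw [if_pos ⟨xs.count a, rfl⟩, if_pos ⟨(x :: xs).count a, rfl⟩, h1]
    rcases eq_or_ne x a with rfl | hxa
    · have h1 : flipO x Λ x b = Λ b x := by unfold flipO; rw [if_pos (Or.inl rfl)]
      have h2 : flipO x Λ b x = Λ x b := by unfold flipO; rw [if_pos (Or.inr rfl)]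
      rw [h1, h2, List.count_cons_self, List.count_cons_of_ne hab]
      rcases Nat.even_or_odd (xs.count x + xs.count b) with h | h
      · rw [if_pos h, if_neg (by rw [Nat.add_right_comm]; simp [Nat.even_add_one, h])]
      · rw [if_neg (by simpa using h), if_pos (by rw [Nat.add_right_comm]; simp [Nat.even_add_one, (Nat.not_even_iff_odd).2 h])]
    rcases eq_or_ne x b with rfl | hxb
    · have h1 : flipO x Λ a x = Λ x a := by unfold flipO; rw [if_pos (Or.inr rfl)]
      have h2 : flipO x Λ x a = Λ a x := by unfold flipO; rw [if_pos (Or.inl rfl)]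
      rw [h1, h2, List.count_cons_self, List.count_cons_of_ne (Ne.symm hab)]
      rcases Nat.even_or_odd (xs.count a + xs.count x) with h | h
      · rw [if_pos h, if_neg (by rw [← Nat.add_assoc]; simp [Nat.even_add_one, h])]
      · rw [if_neg (Nat.not_even_iff_odd.2 h), if_pos (by rw [← Nat.add_assoc]; simp [Nat.even_add_one, (Nat.not_even_iff_odd).2 h])]
    · have h1 : flipO x Λ a b = Λ a b := by
        unfold flipO; rw [if_neg (by push_neg; exact ⟨Ne.symm hxa, Ne.symm hxb⟩)]
      have h2 : flipO x Λ b a = Λ b a := by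
        unfold flipO; rw [if_neg (by push_neg; exact ⟨Ne.symm hxb, Ne.symm hxa⟩)]
      rw [h1, h2, List.count_cons_of_ne hxa, List.count_cons_of_ne hxb]

theorem edges_orientAfter {n : ℕ} (L : List (Fin n)) (Λ : Fin n → Fin n → ℕ) (a b : Fin n) :
    edges (orientAfter Λ L) a b = edges Λ a b := by
  unfold edges
  rw [orientAfter_parity, orientAfter_parity, Nat.add_comm (L.count b)]
  split <;> omega

theorem orientAfter_append {n : ℕ} (Λ : Fin n → Fin n → ℕ) (A B : List (Fin n)) :
    orientAfter Λ (A ++ B) = orientAfter (orientAfter Λ A) B := by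
  induction A generalizing Λ with
  | nil => rfl
  | cons x xs ih => exact ih (flipO x Λ)

theorem admissible_append {n : ℕ} {Λ : Fin n → Fin n → ℕ} {A B : List (Fin n)} :
    Admissible Λ (A ++ B) ↔ Admissible Λ A ∧ Admissible (orientAfter Λ A) B := by
  induction A generalizing Λ with
  | nil => simp [Admissible, orientAfter]
  | cons x xs ih =>
    show (IsSink Λ x ∧ Admissible (flipO x Λ) (xs ++ B)) ↔ _
    rw [ih]
    show _ ↔ (IsSink Λ x ∧ Admissible (flipO x Λ) xs) ∧
      Admissible (orientAfter (flipO x Λ) xs) B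
    tauto

theorem sink_at {n : ℕ} {Λ : Fin n → Fin n → ℕ} {pre post : List (Fin n)} {x : Fin n}
    (h : Admissible Λ (pre ++ x :: post)) : IsSink (orientAfter Λ pre) x :=
  ((admissible_append.1 h).2).1

theorem sink_at' {n : ℕ} {Λ : Fin n → Fin n → ℕ} {pre post : List (Fin n)} {x : Fin n}
    (h : Admissible Λ (pre ++ x :: post)) (y : Fin n) :
    if Even (pre.count x + pre.count y) then Λ x y = 0 else Λ y x = 0 := by
  have := sink_at h y
  rw [orientAfter_parity] at this
  split at this <;> split <;> simp_all

theorem swapRel_symm {n : ℕ} {Λ : Fin n → Fin n → ℕ} {l l' : List (Fin n)}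
    (h : SwapRel (edges Λ) l l') : SwapRel (edges Λ) l' l := by
  rcases h with ⟨l₁, l₂, a, b, hab⟩
  exact SwapRel.swap l₁ l₂ b a (by rw [edges_comm]; exact hab)

theorem sim_symm {n : ℕ} {Λ : Fin n → Fin n → ℕ} {l l' : List (Fin n)}
    (h : Sim (edges Λ) l l') : Sim (edges Λ) l' l := by
  induction h with
  | refl => exact Relation.ReflTransGen.refl
  | tail _ hstep ih =>
    exact Relation.ReflTransGen.trans (Relation.ReflTransGen.single (swapRel_symm hstep)) ih

theorem sim_trans {n : ℕ} {E : Fin n → Fin n → ℕ} {l l' l'' : List (Fin n)}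
    (h : Sim E l l') (h' : Sim E l' l'') : Sim E l l'' :=
  Relation.ReflTransGen.trans h h'

theorem swapRel_perm {n : ℕ} {E : Fin n → Fin n → ℕ} {l l' : List (Fin n)}
    (h : SwapRel E l l') : l.Perm l' := by
  rcases h with ⟨l₁, l₂, a, b, _⟩
  exact (List.perm_append_left_iff l₁).2 (List.Perm.swap b a l₂)

theorem sim_perm {n : ℕ} {E : Fin n → Fin n → ℕ} {l l' : List (Fin n)}
    (h : Sim E l l') : l.Perm l' := by
  induction h with
  | refl => exact List.Perm.refl _
  | tail _ hstep ih => exact ih.trans (swapRel_perm hstep)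

theorem sim_count {n : ℕ} {E : Fin n → Fin n → ℕ} {l l' : List (Fin n)}
    (h : Sim E l l') (v : Fin n) : l.count v = l'.count v :=
  (sim_perm h).count_eq v

theorem sim_cons {n : ℕ} {E : Fin n → Fin n → ℕ} {l l' : List (Fin n)} (x : Fin n)
    (h : Sim E l l') : Sim E (x :: l) (x :: l') := by
  induction h with
  | refl => exact Relation.ReflTransGen.refl
  | tail _ hstep ih =>
    refine Relation.ReflTransGen.tail ih ?_
    rcases hstep with ⟨l₁, l₂, a, b, hab⟩
    exact SwapRel.swap (x :: l₁) l₂ a b hab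

theorem sim_move_front {n : ℕ} {E : Fin n → Fin n → ℕ} {P : List (Fin n)} {x : Fin n}
    (h : ∀ y ∈ P, E y x = 0) (Q : List (Fin n)) :
    Sim E (P ++ x :: Q) (x :: (P ++ Q)) := by
  induction P with
  | nil => exact Relation.ReflTransGen.refl
  | cons y P' ih =>
    have h1 : Sim E (y :: (P' ++ x :: Q)) (y :: x :: (P' ++ Q)) :=
      sim_cons y (ih (fun z hz => h z (List.mem_cons_of_mem _ hz)))
    refine Relation.ReflTransGen.tail h1 ?_
    have := SwapRel.swap (E := E) [] (P' ++ Q) y x (h y (List.mem_cons_self))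
    simpa using this

theorem swap_adm {n : ℕ} : ∀ (l₁ : List (Fin n)) {Λ : Fin n → Fin n → ℕ}
    {a b : Fin n} (l₂ : List (Fin n)), edges Λ a b = 0 →
    Admissible Λ (l₁ ++ a :: b :: l₂) → Admissible Λ (l₁ ++ b :: a :: l₂) := by
  intro l₁
  induction l₁ with
  | nil =>
    intro Λ a b l₂ hab h
    rcases eq_or_ne a b with rfl | hne
    · exact h
    obtain ⟨ha, hb, hrest⟩ : IsSink Λ a ∧ IsSink (flipO a Λ) b ∧
        Admissible (flipO b (flipO a Λ)) l₂ := h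
    have hΛab : Λ a b = 0 := by unfold edges at hab; omega
    have hΛba : Λ b a = 0 := by unfold edges at hab; omega
    refine ⟨?_, ?_, ?_⟩
    · intro y
      rcases eq_or_ne y a with rfl | hya
      · exact hΛba
      · have := hb y
        unfold flipO at this
        rwa [if_neg (by push_neg; exact ⟨Ne.symm hne, hya⟩)] at this
    · intro y
      show flipO b Λ a y = 0
      unfold flipO
      split
      · rcases eq_or_ne y b with rfl | hyb
        · exact hΛba
        · have : a = b := by tauto
          exact absurd this hne
      · exact ha y
    · rw [flipO_comm]; exact hrest
  | cons x l₁' ih =>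
    intro Λ a b l₂ hab h
    obtain ⟨hx, hrest⟩ : IsSink Λ x ∧ Admissible (flipO x Λ) (l₁' ++ a :: b :: l₂) := h
    exact ⟨hx, ih l₂ (by rw [edges_flipO]; exact hab) hrest⟩

theorem adm_of_sim {n : ℕ} {Λ : Fin n → Fin n → ℕ} {l l' : List (Fin n)}
    (hs : Sim (edges Λ) l l') (h : Admissible Λ l) : Admissible Λ l' := by
  induction hs with
  | refl => exact h
  | tail _ hstep ih =>
    rcases hstep with ⟨l₁, l₂, a, b, hab⟩
    exact swap_adm l₁ l₂ hab ih

theorem exists_first_split {n : ℕ} {x : Fin n} {l : List (Fin n)} (h : x ∈ l) :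
    ∃ P Q, l = P ++ x :: Q ∧ x ∉ P := by
  induction l with
  | nil => cases h
  | cons y l' ih =>
    rcases eq_or_ne x y with rfl | hne
    · exact ⟨[], l', rfl, List.not_mem_nil⟩
    · rcases ih (by rcases List.mem_cons.1 h with h' | h'; exact absurd h' hne; exact h') with
        ⟨P, Q, rfl, hxP⟩
      exact ⟨y :: P, Q, rfl, by simp [hne, hxP]⟩

theorem sim_of_counts {n : ℕ} : ∀ (T : List (Fin n)) {Λ : Fin n → Fin n → ℕ}
    {U : List (Fin n)}, Admissible Λ T → Admissible Λ U →
    (∀ v, T.count v = U.count v) → Sim (edges Λ) T U := by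
  intro T
  induction T with
  | nil =>
    intro Λ U _ _ hcnt
    have : U = [] := by
      cases U with
      | nil => rfl
      | cons u us => have := hcnt u; simp at this
    subst this; exact Relation.ReflTransGen.refl
  | cons x T' ih =>
    intro Λ U hT hU hcnt
    obtain ⟨hx, hT'⟩ : IsSink Λ x ∧ Admissible (flipO x Λ) T' := hT
    have hxU : x ∈ U := by
      have := hcnt x
      simp only [List.count_cons_self] at this
      exact List.count_pos_iff.1 (by omega)
    obtain ⟨P, Q, rfl, hxP⟩ := exists_first_split hxU
    -- every y in P is not adjacent to x
    have hPadj : ∀ y ∈ P, edges Λ x y = 0 := by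
      intro y hyP
      obtain ⟨P₁, P₂, hP, hyP₁⟩ := exists_first_split hyP
      have hU' : Admissible Λ (P₁ ++ y :: (P₂ ++ x :: Q)) := by
        rw [hP] at hU; simpa using hU
      have := sink_at' hU' x
      have hyx : Λ y x = 0 := by
        have hcx : P₁.count x = 0 := by
          rw [List.count_eq_zero]; intro hc
          exact hxP (by rw [hP]; exact List.mem_append_left _ hc)
        have hcy : P₁.count y = 0 := by rw [List.count_eq_zero]; exact hyP₁
        rwa [hcy, hcx, if_pos (by exact ⟨0, rfl⟩)] at this
      unfold edges
      rw [hx y, hyx]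
    have hPadj' : ∀ y ∈ P, edges Λ y x = 0 := fun y hy => by
      rw [edges_comm]; exact hPadj y hy
    have hsim1 : Sim (edges Λ) (P ++ x :: Q) (x :: (P ++ Q)) := sim_move_front hPadj' Q
    have hadm1 : Admissible Λ (x :: (P ++ Q)) := adm_of_sim hsim1 hU
    obtain ⟨-, hPQ⟩ : IsSink Λ x ∧ Admissible (flipO x Λ) (P ++ Q) := hadm1
    have hcnt' : ∀ v, T'.count v = (P ++ Q).count v := by
      intro v
      have h1 := hcnt v
      have h2 : (P ++ x :: Q).count v = (x :: (P ++ Q)).count v :=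
        ((sim_perm hsim1).count_eq v)
      rcases eq_or_ne v x with rfl | hne
      · simp only [List.count_cons_self] at h1 h2 ⊢; omega
      · simp only [List.count_cons_of_ne (Ne.symm hne)] at h1 h2 ⊢; omega
    have hsim2 : Sim (edges (flipO x Λ)) T' (P ++ Q) := ih hT' hPQ hcnt'
    have hsim2' : Sim (edges Λ) T' (P ++ Q) := by
      have : edges (flipO x Λ) = edges Λ := by
        funext a b; exact edges_flipO x Λ a b
      rwa [this] at hsim2
    exact sim_trans (sim_cons x hsim2') (sim_symm hsim1)

theorem pathLE_refl {n : ℕ} (Λ : Fin n → Fin n → ℕ) (x : Fin n) : PathLE Λ x x :=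
  Relation.ReflTransGen.refl

theorem pathLE_trans {n : ℕ} {Λ : Fin n → Fin n → ℕ} {x y z : Fin n}
    (h : PathLE Λ x y) (h' : PathLE Λ y z) : PathLE Λ x z :=
  Relation.ReflTransGen.trans h h'

theorem pathLE_single {n : ℕ} {Λ : Fin n → Fin n → ℕ} {x y : Fin n}
    (h : Λ x y ≠ 0) : PathLE Λ x y :=
  Relation.ReflTransGen.single h

theorem pathLE_eq_or_tg {n : ℕ} {Λ : Fin n → Fin n → ℕ} {x y : Fin n}
    (h : PathLE Λ x y) : x = y ∨ Relation.TransGen (fun a b => Λ a b ≠ 0) x y :=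
  (Relation.reflTransGen_iff_eq_or_transGen.1 h).imp Eq.symm id

theorem pathLE_antisymm {n : ℕ} {Λ : Fin n → Fin n → ℕ}
    (hacyc : ∀ a : Fin n, ¬ Relation.TransGen (fun u v => Λ u v ≠ 0) a a)
    {x y : Fin n} (h : PathLE Λ x y) (h' : PathLE Λ y x) : x = y := by
  rcases pathLE_eq_or_tg h with rfl | htg
  · rfl
  rcases pathLE_eq_or_tg h' with rfl | htg'
  · rfl
  exact absurd (htg.trans htg') (hacyc x)

theorem wf_tg {n : ℕ} {Λ : Fin n → Fin n → ℕ}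
    (hacyc : ∀ a : Fin n, ¬ Relation.TransGen (fun u v => Λ u v ≠ 0) a a) :
    WellFounded (Relation.TransGen (fun u v : Fin n => Λ u v ≠ 0)) := by
  have : IsIrrefl (Fin n) (Relation.TransGen (fun u v : Fin n => Λ u v ≠ 0)) := ⟨hacyc⟩
  have : IsTrans (Fin n) (Relation.TransGen (fun u v : Fin n => Λ u v ≠ 0)) :=
    ⟨fun _ _ _ => Relation.TransGen.trans⟩
  exact Finite.wellFounded_of_trans_of_irrefl _

/-- Every nonempty set has a PathLE-minimal element. -/
theorem exists_minimal {n : ℕ} {Λ : Fin n → Fin n → ℕ}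
    (hacyc : ∀ a : Fin n, ¬ Relation.TransGen (fun u v => Λ u v ≠ 0) a a)
    {D : Set (Fin n)} (hD : D.Nonempty) :
    ∃ v ∈ D, ∀ u ∈ D, PathLE Λ u v → u = v := by
  obtain ⟨v, hvD, hmin⟩ := (wf_tg hacyc).has_min D hD
  refine ⟨v, hvD, fun u hu hle => ?_⟩
  rcases pathLE_eq_or_tg hle with rfl | htg
  · rfl
  · exact absurd htg (fun htg => hmin u hu htg)

/-- Every nonempty set has an element with no arrows into the set. -/
theorem exists_top {n : ℕ} {Λ : Fin n → Fin n → ℕ}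
    (hacyc : ∀ a : Fin n, ¬ Relation.TransGen (fun u v => Λ u v ≠ 0) a a)
    {D : Finset (Fin n)} (hD : D.Nonempty) :
    ∃ v ∈ D, ∀ u ∈ D, Λ v u = 0 := by
  have hacyc' : ∀ a : Fin n, ¬ Relation.TransGen (fun u v => Λ v u ≠ 0) a a := by
    intro a ha
    exact hacyc a (by simpa using Relation.TransGen.swap _ _ ha)
  obtain ⟨v, hvD, hmin⟩ := (wf_tg hacyc').has_min (D : Set (Fin n)) ⟨hD.choose, hD.choose_spec⟩
  refine ⟨v, hvD, fun u hu => ?_⟩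
  by_contra hvu
  exact hmin u hu (Relation.TransGen.single hvu)

/-- Topological enumeration of a finite set. -/
theorem exists_enum {n : ℕ} {Λ : Fin n → Fin n → ℕ}
    (hacyc : ∀ a : Fin n, ¬ Relation.TransGen (fun u v => Λ u v ≠ 0) a a)
    (G : Set (Fin n)) :
    ∃ L : List (Fin n), L.Nodup ∧ (∀ v, v ∈ L ↔ v ∈ G) ∧
      L.Pairwise (fun a b => Λ a b = 0) := by
  classical
  suffices h : ∀ (F : Finset (Fin n)), ∃ L : List (Fin n), L.Nodup ∧
      (∀ v, v ∈ L ↔ v ∈ F) ∧ L.Pairwise (fun a b => Λ a b = 0) by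
    obtain ⟨L, h1, h2, h3⟩ := h (G.toFinite.toFinset)
    exact ⟨L, h1, fun v => by rw [h2, Set.Finite.mem_toFinset], h3⟩
  intro F
  induction F using Finset.strongInduction with
  | _ F ih =>
    rcases F.eq_empty_or_nonempty with rfl | hne
    · exact ⟨[], List.nodup_nil, by simp, List.Pairwise.nil⟩
    obtain ⟨a, haF, hatop⟩ := exists_top hacyc hne
    obtain ⟨L', h1, h2, h3⟩ := ih (F.erase a) (Finset.erase_ssubset haF)
    refine ⟨a :: L', ?_, ?_, ?_⟩
    · exact List.nodup_cons.2 ⟨fun hc => (Finset.notMem_erase a F) ((h2 a).1 hc), h1⟩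
    · intro v
      simp only [List.mem_cons, h2, Finset.mem_erase]
      constructor
      · rintro (rfl | ⟨_, hv⟩)
        · exact haF
        · exact hv
      · intro hv
        rcases eq_or_ne v a with rfl | hv'
        · exact Or.inl rfl
        · exact Or.inr ⟨hv', hv⟩
    · exact List.pairwise_cons.2 ⟨fun b hb => hatop b (Finset.mem_of_mem_erase ((h2 b).1 hb)), h3⟩

theorem mem_upSet_self {n : ℕ} (Λ : Fin n → Fin n → ℕ) (x : Fin n) : x ∈ upSet Λ x :=
  pathLE_refl Λ x

theorem upSet_up_closed {n : ℕ} {Λ : Fin n → Fin n → ℕ} {x y z : Fin n}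
    (h : y ∈ upSet Λ x) (h' : PathLE Λ y z) : z ∈ upSet Λ x :=
  pathLE_trans h h'

theorem subset_hull {n : ℕ} (Λ : Fin n → Fin n → ℕ) (F : Set (Fin n)) : F ⊆ hull Λ F :=
  fun x hx => ⟨x, Or.inl hx, pathLE_refl Λ x⟩

theorem hull_mono {n : ℕ} (Λ : Fin n → Fin n → ℕ) {F G : Set (Fin n)} (h : F ⊆ G) :
    hull Λ F ⊆ hull Λ G := by
  rintro y ⟨x, hx | ⟨z, hz, hzx⟩, hxy⟩
  · exact ⟨x, Or.inl (h hx), hxy⟩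
  · exact ⟨x, Or.inr ⟨z, h hz, hzx⟩, hxy⟩

theorem hull_empty {n : ℕ} (Λ : Fin n → Fin n → ℕ) : hull Λ (∅ : Set (Fin n)) = ∅ := by
  ext y
  simp only [hull, Set.mem_setOf_eq, Set.mem_empty_iff_false, iff_false]
  rintro ⟨x, hx | ⟨z, hz, _⟩, _⟩
  · exact hx
  · exact hz

theorem hull_up_closed {n : ℕ} {Λ : Fin n → Fin n → ℕ} {F : Set (Fin n)} {y z : Fin n}
    (h : y ∈ hull Λ F) (h' : PathLE Λ y z) : z ∈ hull Λ F := by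
  rcases h with ⟨x, hx, hxy⟩
  exact ⟨x, hx, pathLE_trans hxy h'⟩

theorem neighbor_mem_hull {n : ℕ} {Λ : Fin n → Fin n → ℕ} {F : Set (Fin n)} {z y : Fin n}
    (hz : z ∈ F) (h : edges Λ z y ≠ 0) : y ∈ hull Λ F :=
  ⟨y, Or.inr ⟨z, hz, h⟩, pathLE_refl Λ y⟩

theorem hull_union {n : ℕ} (Λ : Fin n → Fin n → ℕ) (F G : Set (Fin n)) :
    hull Λ (F ∪ G) = hull Λ F ∪ hull Λ G := by
  ext y
  constructor
  · rintro ⟨x, hx | ⟨z, hz | hz, hzx⟩, hxy⟩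
    · rcases hx with hx | hx
      · exact Or.inl ⟨x, Or.inl hx, hxy⟩
      · exact Or.inr ⟨x, Or.inl hx, hxy⟩
    · exact Or.inl ⟨x, Or.inr ⟨z, hz, hzx⟩, hxy⟩
    · exact Or.inr ⟨x, Or.inr ⟨z, hz, hzx⟩, hxy⟩
  · rintro (h | h)
    · exact hull_mono Λ Set.subset_union_left h
    · exact hull_mono Λ Set.subset_union_right h

/-- The hull of a filter-below set is contained in any set closed under arrows & neighbours. -/
theorem hull_subset_of_closed {n : ℕ} {Λ : Fin n → Fin n → ℕ} {F G : Set (Fin n)}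
    (hFG : F ⊆ G)
    (hnb : ∀ z ∈ F, ∀ y, edges Λ z y ≠ 0 → y ∈ G)
    (hup : ∀ a ∈ G, ∀ y, PathLE Λ a y → y ∈ G) :
    hull Λ F ⊆ G := by
  rintro y ⟨x, hx | ⟨z, hz, hzx⟩, hxy⟩
  · exact hup x (hFG hx) y hxy
  · exact hup x (hnb z hz x hzx) y hxy

theorem mem_suppOf {n : ℕ} {v : Fin n} {l : List (Fin n)} : v ∈ suppOf l ↔ v ∈ l := Iff.rfl

/-- Generic: nested + nodup list-of-lists has membership graded by counts in the flatten. -/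
theorem mem_getD_iff_count_aux {n : ℕ} :
    ∀ (segs : List (List (Fin n))), (∀ l ∈ segs, l.Nodup) →
    (∀ i j (v : Fin n), i ≤ j → v ∈ segs.getD j [] → v ∈ segs.getD i []) →
    ∀ j (v : Fin n), v ∈ segs.getD j [] ↔ j < segs.flatten.count v := by
  intro segs
  induction segs with
  | nil => intro _ _ j v; simp [List.getD]
  | cons seg rest ih =>
    intro hnd hnested j v
    have hnd' : ∀ l ∈ rest, l.Nodup := fun l hl => hnd l (List.mem_cons_of_mem _ hl)
    have hnested' : ∀ i j (v : Fin n), i ≤ j → v ∈ rest.getD j [] → v ∈ rest.getD i [] :=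
      fun i j v hij hv => hnested (i+1) (j+1) v (by omega) hv
    have hflat : (seg :: rest).flatten = seg ++ rest.flatten := rfl
    have hcnt : (seg :: rest).flatten.count v = seg.count v + rest.flatten.count v := by
      rw [hflat, List.count_append]
    have hle1 : seg.count v ≤ 1 := List.nodup_iff_count_le_one.1 (hnd seg (List.mem_cons_self)) v
    cases j with
    | zero =>
      show v ∈ seg ↔ 0 < _
      rw [hcnt]
      constructor
      · intro hv
        have : 0 < seg.count v := List.count_pos_iff.2 hv
        omega
      · intro h
        rcases Nat.lt_or_ge 0 (seg.count v) with h' | h'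
        · exact List.count_pos_iff.1 h'
        · have : 0 < rest.flatten.count v := by omega
          obtain ⟨l, hl, hvl⟩ := List.mem_flatten.1 (List.count_pos_iff.1 this)
          obtain ⟨i, hi, rfl⟩ := List.mem_iff_getElem.1 hl
          have : v ∈ rest.getD i [] := by rwa [List.getD_eq_getElem rest [] hi]
          exact hnested 0 (i+1) v (by omega) this
    | succ j' =>
      show v ∈ rest.getD j' [] ↔ _
      rw [ih hnd' hnested' j' v, hcnt]
      constructor
      · intro h
        have hv0 : v ∈ rest.getD j' [] := (ih hnd' hnested' j' v).2 h
        have : v ∈ seg := hnested 0 (j'+1) v (by omega) hv0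
        have : 0 < seg.count v := List.count_pos_iff.2 this
        omega
      · intro h; omega

theorem count_flatten_all {n : ℕ} {a : Fin n} :
    ∀ (X : List (List (Fin n))), (∀ l ∈ X, a ∈ l ∧ l.Nodup) →
    X.flatten.count a = X.length := by
  intro X
  induction X with
  | nil => simp
  | cons l X' ih =>
    intro h
    have h1 := h l (List.mem_cons_self)
    have : l.count a = 1 := List.count_eq_one_of_mem h1.2 h1.1
    show (l ++ X'.flatten).count a = _
    rw [List.count_append, this, ih (fun l' hl' => h l' (List.mem_cons_of_mem _ hl'))]
    simp [Nat.add_comm]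

section SegLemmas
variable {n : ℕ} {Λ : Fin n → Fin n → ℕ} {S : List (Fin n)} {segs : List (List (Fin n))}

theorem segs_nested (hsegs : Segments Λ S segs) {i j : ℕ} {v : Fin n} (hij : i ≤ j)
    (hv : v ∈ segs.getD j []) : v ∈ segs.getD i [] := by
  have hj : j < segs.length := by
    by_contra h
    rw [List.getD_eq_default _ _ (by omega)] at hv
    exact absurd hv (List.not_mem_nil)
  have hi : i < segs.length := by omega
  have hsupp := hsegs.2.2.2 i hi
  have : v ∈ suppOf ((segs.drop i).flatten) := by
    rw [mem_suppOf]
    refine List.mem_flatten.2 ⟨segs.getD j [], ?_, hv⟩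
    rw [List.getD_eq_getElem segs [] hj]
    have : segs[j] = (segs.drop i)[j - i]'(by rw [List.length_drop]; omega) := by
      rw [List.getElem_drop]
      congr 1
      omega
    rw [this]
    exact List.getElem_mem _
  rw [← hsupp] at this
  exact this

theorem segs_mem_iff (hsegs : Segments Λ S segs) (j : ℕ) (v : Fin n) :
    v ∈ segs.getD j [] ↔ j < S.count v := by
  have := mem_getD_iff_count_aux segs (fun l hl => (hsegs.2.2.1 l hl).2)
    (fun i j v hij hv => segs_nested hsegs hij hv) j v
  rwa [← sim_count hsegs.2.1 v] at this

theorem segs_suppOf_eq (hsegs : Segments Λ S segs) (j : ℕ) :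
    suppOf (segs.getD j []) = {v | j < S.count v} :=
  Set.ext fun v => segs_mem_iff hsegs j v

theorem segs_count_le (hsegs : Segments Λ S segs) (v : Fin n) :
    S.count v ≤ segs.length := by
  by_contra h
  have : v ∈ segs.getD segs.length [] := (segs_mem_iff hsegs _ v).2 (by omega)
  rw [List.getD_eq_default _ _ (le_refl _)] at this
  exact absurd this (List.not_mem_nil)

theorem segs_length_le {segs' : List (List (Fin n))} (hsegs : Segments Λ S segs)
    (hsegs' : Segments Λ S segs') : segs.length ≤ segs'.length := by
  rcases Nat.eq_zero_or_pos segs.length with h0 | hpos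
  · omega
  have hlast : segs.length - 1 < segs.length := by omega
  have hne : segs.getD (segs.length - 1) [] ≠ [] := by
    rw [List.getD_eq_getElem segs [] hlast]
    exact (hsegs.2.2.1 _ (List.getElem_mem _)).1
  obtain ⟨v, hv⟩ := List.exists_mem_of_ne_nil _ hne
  have : segs.length - 1 < S.count v := (segs_mem_iff hsegs _ v).1 hv
  have := segs_count_le hsegs' v
  omega

theorem segs_length_eq {segs' : List (List (Fin n))} (hsegs : Segments Λ S segs)
    (hsegs' : Segments Λ S segs') : segs.length = segs'.length :=
  le_antisymm (segs_length_le hsegs hsegs') (segs_length_le hsegs' hsegs)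

theorem segs_occ (hsegs : Segments Λ S segs) {m : ℕ} {a : Fin n}
    (hm : m < segs.length) (ha : a ∈ segs.getD m []) :
    ∃ pre post, segs.flatten = pre ++ a :: post ∧ pre.count a = m ∧
      ∀ v, v ∉ segs.getD m [] → pre.count v = segs.flatten.count v := by
  obtain ⟨P, Q, hPQ, haP⟩ := exists_first_split ha
  have hdrop : segs.drop m = segs.getD m [] :: segs.drop (m+1) := by
    rw [List.getD_eq_getElem segs [] hm]
    exact List.drop_eq_getElem_cons hm
  have hflat : segs.flatten = (segs.take m).flatten ++ (segs.getD m [] ++ (segs.drop (m+1)).flatten) := by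
    conv_lhs => rw [← List.take_append_drop m segs]
    rw [List.flatten_append, hdrop]
    rfl
  refine ⟨(segs.take m).flatten ++ P, Q ++ (segs.drop (m+1)).flatten, ?_, ?_, ?_⟩
  · rw [hflat, hPQ]; simp
  · rw [List.count_append]
    have h1 : ((segs.take m).flatten).count a = m := by
      rw [count_flatten_all]
      · rw [List.length_take]; omega
      · intro l hl
        obtain ⟨i, hi, rfl⟩ := List.mem_iff_getElem.1 hl
        rw [List.length_take] at hi
        have hilen : i < segs.length := by omega
        have : (segs.take m)[i] = segs[i]'hilen := List.getElem_take ..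
        rw [this]
        have hmem : a ∈ segs.getD i [] := segs_nested hsegs (by omega) ha
        rw [List.getD_eq_getElem segs [] hilen] at hmem
        exact ⟨hmem, (hsegs.2.2.1 _ (List.getElem_mem _)).2⟩
    have h2 : P.count a = 0 := List.count_eq_zero.2 haP
    omega
  · intro v hv
    have hdropcnt : ((segs.drop (m+1)).flatten).count v = 0 := by
      rw [List.count_eq_zero]
      intro hc
      obtain ⟨l, hl, hvl⟩ := List.mem_flatten.1 hc
      obtain ⟨i, hi, rfl⟩ := List.mem_iff_getElem.1 hl
      rw [List.length_drop] at hi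
      have : (segs.drop (m+1))[i] = segs[m+1+i]'(by omega) := List.getElem_drop ..
      rw [this] at hvl
      have : v ∈ segs.getD (m+1+i) [] := by
        rwa [List.getD_eq_getElem segs [] (by omega)]
      exact hv (segs_nested hsegs (by omega) this)
    have hsegcnt : (segs.getD m []).count v = 0 := List.count_eq_zero.2 hv
    have hPcnt : P.count v = 0 := by
      have : P.count v ≤ (segs.getD m []).count v := by
        rw [hPQ, List.count_append]; omega
      omega
    rw [hflat, List.count_append, List.count_append, List.count_append, hsegcnt, hdropcnt,
      hPcnt]

theorem supp_arrow_closed (hsegs : Segments Λ S segs) {i : ℕ} {a y : Fin n}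
    (ha : a ∈ segs.getD i []) (hΛ : Λ a y ≠ 0) : y ∈ segs.getD i [] := by
  by_contra hy
  have hi : i < segs.length := by
    by_contra h
    rw [List.getD_eq_default _ _ (by omega)] at ha
    exact absurd ha (List.not_mem_nil)
  set k := segs.flatten.count y with hk
  have hky : S.count y = k := (sim_count hsegs.2.1 y).symm ▸ rfl
  have hkle : k ≤ i := by
    by_contra h
    exact hy ((segs_mem_iff hsegs i y).2 (by omega))
  have hak : a ∈ segs.getD k [] := segs_nested hsegs hkle ha
  have hyk : y ∉ segs.getD k [] := fun hc => by
    have := (segs_mem_iff hsegs k y).1 hc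
    omega
  obtain ⟨pre, post, hfl, hca, hcv⟩ := segs_occ hsegs (by omega) hak
  have hadm := hsegs.1
  rw [hfl] at hadm
  have := sink_at' hadm y
  rw [hca, hcv y hyk, ← hk, ← hky, hky] at this
  rw [if_pos ⟨k, by omega⟩] at this
  exact hΛ this

theorem supp_neighbor (hsegs : Segments Λ S segs)
    (hacyc : ∀ a : Fin n, ¬ Relation.TransGen (fun u v => Λ u v ≠ 0) a a)
    {i : ℕ} {z y : Fin n}
    (hz : z ∈ segs.getD (i+1) []) (he : edges Λ z y ≠ 0) : y ∈ segs.getD i [] := by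
  rcases Nat.eq_zero_or_pos (Λ z y) with hzy | hzy
  swap
  · exact segs_nested hsegs (by omega) (supp_arrow_closed hsegs hz (by omega))
  have hyz : Λ y z ≠ 0 := by unfold edges at he; omega
  by_contra hy
  have hi1 : i + 1 < segs.length := by
    by_contra h
    rw [List.getD_eq_default _ _ (by omega)] at hz
    exact absurd hz (List.not_mem_nil)
  set k := segs.flatten.count y with hk
  have hky : S.count y = k := (sim_count hsegs.2.1 y).symm ▸ rfl
  have hkle : k ≤ i := by
    by_contra h
    exact hy ((segs_mem_iff hsegs i y).2 (by omega))
  have hzk : z ∈ segs.getD (k+1) [] := segs_nested hsegs (by omega) hz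
  have hyk : y ∉ segs.getD (k+1) [] := fun hc => by
    have := (segs_mem_iff hsegs (k+1) y).1 hc
    omega
  obtain ⟨pre, post, hfl, hca, hcv⟩ := segs_occ hsegs (by omega) hzk
  have hadm := hsegs.1
  rw [hfl] at hadm
  have := sink_at' hadm y
  rw [hca, hcv y hyk, ← hk, ← hky, hky] at this
  rw [if_neg (by rintro ⟨c, hc⟩; omega)] at this
  exact hyz this

theorem supp_pathLE_closed (hsegs : Segments Λ S segs) {i : ℕ} {a y : Fin n}
    (ha : a ∈ segs.getD i []) (h : PathLE Λ a y) : y ∈ segs.getD i [] := by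
  induction h with
  | refl => exact ha
  | tail _ hstep ih => exact supp_arrow_closed hsegs ih hstep

theorem hull_supp_subset (hsegs : Segments Λ S segs)
    (hacyc : ∀ a : Fin n, ¬ Relation.TransGen (fun u v => Λ u v ≠ 0) a a) (i : ℕ) :
    hull Λ (suppOf (segs.getD (i+1) [])) ⊆ suppOf (segs.getD i []) := by
  refine hull_subset_of_closed ?_ ?_ ?_
  · intro v hv
    exact segs_nested hsegs (by omega) hv
  · intro z hz y hzy
    exact supp_neighbor hsegs hacyc hz hzy
  · intro a ha y hay
    exact supp_pathLE_closed hsegs ha hay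

end SegLemmas

theorem adm_single {n : ℕ} : ∀ (seg : List (Fin n)) (Λ : Fin n → Fin n → ℕ),
    (∀ a, Λ a a = 0) → seg.Nodup → seg.Pairwise (fun a b => Λ a b = 0) →
    (∀ a ∈ seg, ∀ y, Λ a y ≠ 0 → y ∈ seg) → Admissible Λ seg := by
  intro seg
  induction seg with
  | nil => intro Λ _ _ _ _; trivial
  | cons a tl ih =>
    intro Λ hloop hnd hpw hcl
    have hat : a ∉ tl := (List.nodup_cons.1 hnd).1
    constructor
    · intro y
      by_contra hy
      have hy' : y ∈ a :: tl := hcl a (List.mem_cons_self) y hy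
      rcases List.mem_cons.1 hy' with rfl | hmem
      · exact hy (hloop _)
      · exact hy ((List.pairwise_cons.1 hpw).1 y hmem)
    · refine ih (flipO a Λ) ?_ (List.nodup_cons.1 hnd).2 ?_ ?_
      · intro y
        unfold flipO
        split
        · exact hloop _
        · exact hloop _
      · refine List.Pairwise.imp_of_mem ?_ (List.pairwise_cons.1 hpw).2
        intro x z hx hz hxz
        have hxa : x ≠ a := fun h => hat (h ▸ hx)
        have hza : z ≠ a := fun h => hat (h ▸ hz)
        unfold flipO
        rwa [if_neg (by push_neg; exact ⟨hxa, hza⟩)]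
      · intro x hx y hy
        have hxa : x ≠ a := fun h => hat (h ▸ hx)
        rcases eq_or_ne y a with rfl | hya
        · exfalso
          apply hy
          show flipO y Λ x y = 0
          unfold flipO
          rw [if_pos (Or.inr rfl)]
          exact (List.pairwise_cons.1 hpw).1 x hx
        · have : flipO a Λ x y = Λ x y := by
            unfold flipO; rw [if_neg (by push_neg; exact ⟨hxa, hya⟩)]
          rw [this] at hy
          rcases List.mem_cons.1 (hcl x (List.mem_cons_of_mem _ hx) y hy) with rfl | h
          · exact absurd rfl hya
          · exact h

theorem getD_mono_of_step {n : ℕ} {L : List (List (Fin n))}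
    (hsub : ∀ j, j + 1 < L.length → ∀ v, v ∈ L.getD (j+1) [] → v ∈ L.getD j []) :
    ∀ i j (v : Fin n), i ≤ j → v ∈ L.getD j [] → v ∈ L.getD i [] := by
  intro i j v hij
  induction j with
  | zero =>
    have : i = 0 := by omega
    subst this; exact id
  | succ j' ih =>
    intro hv
    rcases Nat.lt_or_ge (j' + 1) L.length with h | h
    swap
    · rw [List.getD_eq_default _ _ h] at hv
      exact absurd hv (List.not_mem_nil)
    rcases Nat.eq_or_lt_of_le hij with rfl | hlt
    · exact hv
    · exact ih (by omega) (hsub j' h v hv)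

theorem adm_chain {n : ℕ} : ∀ (L : List (List (Fin n))) (Λ : Fin n → Fin n → ℕ),
    (∀ a, Λ a a = 0) →
    (∀ seg ∈ L, seg.Nodup) →
    (∀ seg ∈ L, seg.Pairwise (fun a b => Λ a b = 0)) →
    (∀ seg ∈ L, ∀ a ∈ seg, ∀ y, Λ a y ≠ 0 → y ∈ seg) →
    (∀ j, j + 1 < L.length → ∀ v : Fin n, v ∈ L.getD (j+1) [] → v ∈ L.getD j []) →
    (∀ j, j + 1 < L.length → ∀ z ∈ L.getD (j+1) [], ∀ y, edges Λ z y ≠ 0 → y ∈ L.getD j []) →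
    Admissible Λ L.flatten := by
  intro L
  induction L with
  | nil => intro Λ _ _ _ _ _ _; trivial
  | cons seg rest ih =>
    intro Λ hloop hnd hpw hcl hsub hnb
    have hflat : (seg :: rest).flatten = seg ++ rest.flatten := rfl
    rw [hflat, admissible_append]
    constructor
    · exact adm_single seg Λ hloop (hnd seg (List.mem_cons_self))
        (hpw seg (List.mem_cons_self)) (hcl seg (List.mem_cons_self))
    set Λ' := orientAfter Λ seg with hΛ'
    -- membership of any member list of `rest` is contained in `seg`
    have hsubAll : ∀ j (v : Fin n), v ∈ rest.getD j [] → v ∈ seg := by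
      intro j v hv
      have : v ∈ (seg :: rest).getD (j+1) [] := hv
      have := getD_mono_of_step hsub 0 (j+1) v (by omega) this
      exact this
    have hmemrest : ∀ seg' ∈ rest, ∀ v ∈ seg', v ∈ seg := by
      intro seg' hseg' v hv
      obtain ⟨j, hj, rfl⟩ := List.mem_iff_getElem.1 hseg'
      exact hsubAll j v (by rwa [List.getD_eq_getElem rest [] hj])
    have hΛ'in : ∀ a b : Fin n, a ∈ seg → b ∈ seg → Λ' a b = Λ a b := by
      intro a b ha hb
      rw [hΛ', orientAfter_parity]
      have hca : seg.count a = 1 := List.count_eq_one_of_mem (hnd seg (List.mem_cons_self)) ha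
      have hcb : seg.count b = 1 := List.count_eq_one_of_mem (hnd seg (List.mem_cons_self)) hb
      rw [hca, hcb, if_pos ⟨1, rfl⟩]
    have hΛ'out : ∀ a b : Fin n, a ∈ seg → b ∉ seg → Λ' a b = Λ b a := by
      intro a b ha hb
      rw [hΛ', orientAfter_parity]
      have hca : seg.count a = 1 := List.count_eq_one_of_mem (hnd seg (List.mem_cons_self)) ha
      have hcb : seg.count b = 0 := List.count_eq_zero.2 hb
      rw [hca, hcb, if_neg (by rintro ⟨c, hc⟩; omega)]
    refine ih Λ' ?_ ?_ ?_ ?_ ?_ ?_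
    · intro a
      rw [hΛ', orientAfter_parity, if_pos ⟨seg.count a, by omega⟩]
      exact hloop a
    · exact fun s hs => hnd s (List.mem_cons_of_mem _ hs)
    · intro s hs
      refine List.Pairwise.imp_of_mem ?_ (hpw s (List.mem_cons_of_mem _ hs))
      intro x z hx hz hxz
      rw [hΛ'in x z (hmemrest s hs x hx) (hmemrest s hs z hz)]
      exact hxz
    · intro s hs a ha y hy
      by_cases hyseg : y ∈ seg
      · rw [hΛ'in a y (hmemrest s hs a ha) hyseg] at hy
        exact hcl s (List.mem_cons_of_mem _ hs) a ha y hy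
      · exfalso
        rw [hΛ'out a y (hmemrest s hs a ha) hyseg] at hy
        have hrne : 0 + 1 < (seg :: rest).length := by
          have : rest ≠ [] := List.ne_nil_of_mem hs
          have : 0 < rest.length := List.length_pos_iff.2 this
          simp only [List.length_cons]; omega
        obtain ⟨j, hj, rfl⟩ := List.mem_iff_getElem.1 hs
        have haj : a ∈ rest.getD 0 [] := by
          refine getD_mono_of_step (L := rest) ?_ 0 j a (by omega) ?_
          · intro j' hj' v hv
            exact hsub (j' + 1) (by simp only [List.length_cons]; omega) v hv
          · rwa [List.getD_eq_getElem rest [] hj]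
        have : y ∈ (seg :: rest).getD 0 [] := by
          refine hnb 0 hrne a haj y ?_
          unfold edges
          omega
        exact hyseg this
    · intro j hj v hv
      exact hsub (j+1) (by simp only [List.length_cons] at hj ⊢; omega) v hv
    · intro j hj z hz y hy
      have : edges Λ z y ≠ 0 := by
        rw [hΛ'] at hy
        rwa [edges_orientAfter] at hy
      exact hnb (j+1) (by simp only [List.length_cons] at hj ⊢; omega) z hz y this

section Chain
variable {n : ℕ} {Λ : Fin n → Fin n → ℕ}
  (hacyc : ∀ a : Fin n, ¬ Relation.TransGen (fun u v => Λ u v ≠ 0) a a)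

noncomputable def enumOf (Λ : Fin n → Fin n → ℕ)
    (hacyc : ∀ a : Fin n, ¬ Relation.TransGen (fun u v => Λ u v ≠ 0) a a)
    (G : Set (Fin n)) : List (Fin n) :=
  (exists_enum hacyc G).choose

theorem enumOf_nodup (G : Set (Fin n)) : (enumOf Λ hacyc G).Nodup :=
  (exists_enum hacyc G).choose_spec.1

theorem enumOf_mem (G : Set (Fin n)) (v : Fin n) : v ∈ enumOf Λ hacyc G ↔ v ∈ G :=
  (exists_enum hacyc G).choose_spec.2.1 v

theorem enumOf_pairwise (G : Set (Fin n)) :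
    (enumOf Λ hacyc G).Pairwise (fun a b => Λ a b = 0) :=
  (exists_enum hacyc G).choose_spec.2.2

theorem enumOf_supp (G : Set (Fin n)) : suppOf (enumOf Λ hacyc G) = G :=
  Set.ext fun v => enumOf_mem hacyc G v

noncomputable def chainList (Λ : Fin n → Fin n → ℕ)
    (hacyc : ∀ a : Fin n, ¬ Relation.TransGen (fun u v => Λ u v ≠ 0) a a)
    (Gs : List (Set (Fin n))) : List (List (Fin n)) :=
  Gs.map (enumOf Λ hacyc)

theorem chainList_length (Gs : List (Set (Fin n))) :
    (chainList Λ hacyc Gs).length = Gs.length := List.length_map _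

theorem chainList_getD (Gs : List (Set (Fin n))) {i : ℕ} (hi : i < Gs.length) :
    (chainList Λ hacyc Gs).getD i [] = enumOf Λ hacyc (Gs.getD i ∅) := by
  unfold chainList
  rw [List.getD_eq_getElem _ _ (by rwa [List.length_map]), List.getElem_map,
    List.getD_eq_getElem _ _ hi]

theorem chainList_supp (Gs : List (Set (Fin n))) (i : ℕ) :
    suppOf ((chainList Λ hacyc Gs).getD i []) = Gs.getD i ∅ := by
  rcases Nat.lt_or_ge i Gs.length with hi | hi
  · rw [chainList_getD hacyc Gs hi, enumOf_supp]
  · rw [List.getD_eq_default _ _ (by rw [chainList_length]; omega),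
      List.getD_eq_default _ _ hi]
    ext v
    simp [suppOf]

theorem setGetD_mono {Gs : List (Set (Fin n))}
    (hsub : ∀ j, j + 1 < Gs.length → Gs.getD (j+1) ∅ ⊆ Gs.getD j ∅) :
    ∀ i j, i ≤ j → Gs.getD j ∅ ⊆ Gs.getD i ∅ := by
  intro i j hij
  induction j with
  | zero =>
    have : i = 0 := by omega
    subst this; exact fun _ => id
  | succ j' ih =>
    intro v hv
    rcases Nat.lt_or_ge (j' + 1) Gs.length with h | h
    swap
    · rw [List.getD_eq_default _ _ h] at hv
      exact absurd hv (Set.notMem_empty v)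
    rcases Nat.eq_or_lt_of_le hij with rfl | hlt
    · exact hv
    · exact ih (by omega) (hsub j' h hv)

theorem chain_segments (hloop : ∀ a, Λ a a = 0) (Gs : List (Set (Fin n)))
    (hup : ∀ G ∈ Gs, ∀ a ∈ G, ∀ y, PathLE Λ a y → y ∈ G)
    (hne : ∀ G ∈ Gs, G.Nonempty)
    (hhull : ∀ j, j + 1 < Gs.length → hull Λ (Gs.getD (j+1) ∅) ⊆ Gs.getD j ∅) :
    Segments Λ (chainList Λ hacyc Gs).flatten (chainList Λ hacyc Gs) := by
  have hGd : ∀ i, i < Gs.length → Gs.getD i ∅ ∈ Gs := by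
    intro i hi
    rw [List.getD_eq_getElem _ _ hi]
    exact List.getElem_mem _
  have hsubG : ∀ j, j + 1 < Gs.length → Gs.getD (j+1) ∅ ⊆ Gs.getD j ∅ := by
    intro j hj v hv
    exact hhull j hj (subset_hull Λ _ hv)
  refine ⟨?_, Relation.ReflTransGen.refl, ?_, ?_⟩
  · refine adm_chain _ Λ hloop ?_ ?_ ?_ ?_ ?_
    · intro seg hseg
      obtain ⟨G, _, rfl⟩ := List.mem_map.1 hseg
      exact enumOf_nodup hacyc G
    · intro seg hseg
      obtain ⟨G, _, rfl⟩ := List.mem_map.1 hseg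
      exact enumOf_pairwise hacyc G
    · intro seg hseg a ha y hy
      obtain ⟨G, hG, rfl⟩ := List.mem_map.1 hseg
      rw [enumOf_mem] at ha ⊢
      exact hup G hG a ha y (pathLE_single hy)
    · intro j hj v hv
      rw [chainList_length] at hj
      rw [chainList_getD hacyc Gs hj, enumOf_mem] at hv
      rw [chainList_getD hacyc Gs (by omega), enumOf_mem]
      exact hsubG j hj hv
    · intro j hj z hz y hy
      rw [chainList_length] at hj
      rw [chainList_getD hacyc Gs hj, enumOf_mem] at hz
      rw [chainList_getD hacyc Gs (by omega), enumOf_mem]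
      exact hhull j hj (neighbor_mem_hull hz hy)
  · intro seg hseg
    obtain ⟨G, hG, rfl⟩ := List.mem_map.1 hseg
    refine ⟨?_, enumOf_nodup hacyc G⟩
    obtain ⟨v, hv⟩ := hne G hG
    exact List.ne_nil_of_mem ((enumOf_mem hacyc G v).2 hv)
  · intro i hi
    rw [chainList_length] at hi
    rw [chainList_supp hacyc Gs i]
    ext v
    simp only [mem_suppOf, List.mem_flatten]
    constructor
    · intro hv
      refine ⟨(chainList Λ hacyc Gs).getD i [], ?_, ?_⟩
      · have hi' : i < (chainList Λ hacyc Gs).length := by rw [chainList_length]; omega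
        rw [List.getD_eq_getElem _ _ hi']
        have : (chainList Λ hacyc Gs)[i] =
            ((chainList Λ hacyc Gs).drop i)[0]'(by rw [List.length_drop]; omega) := by
          rw [List.getElem_drop]
          simp
        rw [this]
        exact List.getElem_mem _
      · rw [chainList_getD hacyc Gs hi, enumOf_mem]
        exact hv
    · rintro ⟨l, hl, hvl⟩
      obtain ⟨j, hj, rfl⟩ := List.mem_iff_getElem.1 hl
      rw [List.length_drop, chainList_length] at hj
      have : ((chainList Λ hacyc Gs).drop i)[j] =
          (chainList Λ hacyc Gs)[i + j]'(by rw [chainList_length]; omega) := List.getElem_drop ..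
      rw [this] at hvl
      have : v ∈ (chainList Λ hacyc Gs).getD (i + j) [] := by
        rwa [List.getD_eq_getElem _ _ (by rw [chainList_length]; omega)]
      rw [chainList_getD hacyc Gs (by omega), enumOf_mem] at this
      exact setGetD_mono hsubG i (i + j) (by omega) this

end Chain

section PSet
variable {n : ℕ} (Λ : Fin n → Fin n → ℕ)

/-- The segment supports of the principal sequence `S_{h,v}` for `p = (h, v)`. -/
def pset (p : ℕ × Fin n) (i : ℕ) : Set (Fin n) :=
  if i < p.1 then (hull Λ)^[p.1 - 1 - i] (upSet Λ p.2) else ∅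

theorem iter_hull_up_closed (k : ℕ) (v : Fin n) {a y : Fin n}
    (ha : a ∈ (hull Λ)^[k] (upSet Λ v)) (hay : PathLE Λ a y) :
    y ∈ (hull Λ)^[k] (upSet Λ v) := by
  induction k generalizing a y with
  | zero => exact upSet_up_closed ha hay
  | succ k ih =>
    rw [Function.iterate_succ_apply'] at ha ⊢
    exact hull_up_closed ha hay

theorem subset_iter_hull (k : ℕ) (G : Set (Fin n)) : G ⊆ (hull Λ)^[k] G := by
  induction k with
  | zero => exact fun _ => id
  | succ k ih =>
    rw [Function.iterate_succ_apply']
    exact fun x hx => subset_hull Λ _ (ih hx)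

theorem pset_up_closed {p : ℕ × Fin n} {i : ℕ} {a y : Fin n}
    (ha : a ∈ pset Λ p i) (hay : PathLE Λ a y) : y ∈ pset Λ p i := by
  unfold pset at ha ⊢
  split at ha
  · rw [if_pos (by assumption)]
    exact iter_hull_up_closed Λ _ _ ha hay
  · exact absurd ha (Set.notMem_empty a)

theorem pset_nonempty {p : ℕ × Fin n} {i : ℕ} (hi : i < p.1) : (pset Λ p i).Nonempty := by
  unfold pset
  rw [if_pos hi]
  exact ⟨p.2, subset_iter_hull Λ _ _ (mem_upSet_self Λ p.2)⟩

theorem pset_empty {p : ℕ × Fin n} {i : ℕ} (hi : p.1 ≤ i) : pset Λ p i = ∅ := by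
  unfold pset
  rw [if_neg (by omega)]

theorem pset_succ_hull {p : ℕ × Fin n} {i : ℕ} (hi : i + 1 < p.1) :
    pset Λ p i = hull Λ (pset Λ p (i+1)) := by
  unfold pset
  rw [if_pos (by omega), if_pos hi]
  have : p.1 - 1 - i = (p.1 - 1 - (i+1)) + 1 := by omega
  rw [this, Function.iterate_succ_apply']

theorem hull_pset_subset (p : ℕ × Fin n) (i : ℕ) :
    hull Λ (pset Λ p (i+1)) ⊆ pset Λ p i := by
  rcases Nat.lt_or_ge (i+1) p.1 with h | h
  · rw [← pset_succ_hull Λ h]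
  · rw [pset_empty Λ h, hull_empty]
    exact Set.empty_subset _

theorem pset_top {p : ℕ × Fin n} (hp : 0 < p.1) : pset Λ p (p.1 - 1) = upSet Λ p.2 := by
  unfold pset
  rw [if_pos (by omega)]
  have : p.1 - 1 - (p.1 - 1) = 0 := by omega
  rw [this]
  rfl

/-- maximum of the heights of a list of pairs -/
def maxh (ps : List (ℕ × Fin n)) : ℕ := ps.foldr (fun p m => max p.1 m) 0

theorem le_maxh {ps : List (ℕ × Fin n)} {p : ℕ × Fin n} (hp : p ∈ ps) : p.1 ≤ maxh ps := by
  induction ps with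
  | nil => cases hp
  | cons q ps' ih =>
    rcases List.mem_cons.1 hp with rfl | h
    · exact Nat.le_max_left _ _
    · exact le_trans (ih h) (Nat.le_max_right _ _)

theorem exists_maxh {ps : List (ℕ × Fin n)} {i : ℕ} (hi : i < maxh ps) :
    ∃ p ∈ ps, i < p.1 := by
  induction ps with
  | nil => simp [maxh] at hi
  | cons q ps' ih =>
    have : maxh (q :: ps') = max q.1 (maxh ps') := rfl
    rw [this] at hi
    rcases Nat.lt_or_ge i q.1 with h | h
    · exact ⟨q, List.mem_cons_self, h⟩
    · have : i < maxh ps' := by omega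
      obtain ⟨p, hp, hip⟩ := ih this
      exact ⟨p, List.mem_cons_of_mem _ hp, hip⟩

/-- The union of the `i`-th segment supports over a list of pairs. -/
def Us (ps : List (ℕ × Fin n)) (i : ℕ) : Set (Fin n) :=
  {v | ∃ p ∈ ps, v ∈ pset Λ p i}

theorem Us_nil (i : ℕ) : Us Λ ([] : List (ℕ × Fin n)) i = ∅ := by
  ext v; simp [Us]

theorem Us_cons (p : ℕ × Fin n) (ps : List (ℕ × Fin n)) (i : ℕ) :
    Us Λ (p :: ps) i = pset Λ p i ∪ Us Λ ps i := by
  ext v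
  simp only [Us, Set.mem_setOf_eq, List.mem_cons, Set.mem_union]
  constructor
  · rintro ⟨q, rfl | hq, hv⟩
    · exact Or.inl hv
    · exact Or.inr ⟨q, hq, hv⟩
  · rintro (hv | ⟨q, hq, hv⟩)
    · exact ⟨p, Or.inl rfl, hv⟩
    · exact ⟨q, Or.inr hq, hv⟩

theorem Us_up_closed {ps : List (ℕ × Fin n)} {i : ℕ} {a y : Fin n}
    (ha : a ∈ Us Λ ps i) (hay : PathLE Λ a y) : y ∈ Us Λ ps i := by
  obtain ⟨p, hp, hv⟩ := ha
  exact ⟨p, hp, pset_up_closed Λ hv hay⟩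

theorem Us_empty_of_ge {ps : List (ℕ × Fin n)} {i : ℕ} (hi : maxh ps ≤ i) :
    Us Λ ps i = ∅ := by
  ext v
  simp only [Us, Set.mem_setOf_eq, Set.mem_empty_iff_false, iff_false]
  rintro ⟨p, hp, hv⟩
  rw [pset_empty Λ (le_trans (le_maxh hp) hi)] at hv
  exact hv

theorem Us_nonempty {ps : List (ℕ × Fin n)} {i : ℕ} (hi : i < maxh ps) :
    (Us Λ ps i).Nonempty := by
  obtain ⟨p, hp, hip⟩ := exists_maxh hi
  obtain ⟨v, hv⟩ := pset_nonempty Λ (p := p) hip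
  exact ⟨v, p, hp, hv⟩

theorem hull_Us_subset (ps : List (ℕ × Fin n)) (i : ℕ) :
    hull Λ (Us Λ ps (i+1)) ⊆ Us Λ ps i := by
  rintro y ⟨x, hx | ⟨z, hz, hzx⟩, hxy⟩
  · obtain ⟨p, hp, hv⟩ := hx
    exact ⟨p, hp, hull_pset_subset Λ p i (hull_up_closed (subset_hull Λ _ hv) hxy)⟩
  · obtain ⟨p, hp, hv⟩ := hz
    refine ⟨p, hp, hull_pset_subset Λ p i (hull_up_closed (neighbor_mem_hull hv hzx) hxy)⟩

/-- The list of segment supports of the join over `ps`. -/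
def joinGs (ps : List (ℕ × Fin n)) : List (Set (Fin n)) :=
  (List.range (maxh ps)).map (Us Λ ps)

theorem joinGs_length (ps : List (ℕ × Fin n)) : (joinGs Λ ps).length = maxh ps := by
  unfold joinGs
  rw [List.length_map, List.length_range]

theorem joinGs_getD (ps : List (ℕ × Fin n)) (i : ℕ) :
    (joinGs Λ ps).getD i ∅ = Us Λ ps i := by
  rcases Nat.lt_or_ge i (maxh ps) with hi | hi
  · unfold joinGs
    rw [List.getD_eq_getElem _ _ (by rw [List.length_map, List.length_range]; omega),
      List.getElem_map, List.getElem_range]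
  · rw [List.getD_eq_default _ _ (by rw [joinGs_length]; omega), Us_empty_of_ge Λ hi]

end PSet

section JoinCons
variable {n : ℕ} {Λ : Fin n → Fin n → ℕ}
  (hacyc : ∀ a : Fin n, ¬ Relation.TransGen (fun u v => Λ u v ≠ 0) a a)

/-- The canonical representative of the join of the principal sequences indexed by `ps`. -/
noncomputable def jList (Λ : Fin n → Fin n → ℕ)
    (hacyc : ∀ a : Fin n, ¬ Relation.TransGen (fun u v => Λ u v ≠ 0) a a)
    (ps : List (ℕ × Fin n)) : List (List (Fin n)) :=
  chainList Λ hacyc (joinGs Λ ps)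

theorem jList_segments (hloop : ∀ a, Λ a a = 0) (ps : List (ℕ × Fin n)) :
    Segments Λ (jList Λ hacyc ps).flatten (jList Λ hacyc ps) := by
  refine chain_segments hacyc hloop _ ?_ ?_ ?_
  · intro G hG a ha y hay
    obtain ⟨i, _, rfl⟩ := List.mem_map.1 hG
    exact Us_up_closed Λ ha hay
  · intro G hG
    obtain ⟨i, hi, rfl⟩ := List.mem_map.1 hG
    exact Us_nonempty Λ (List.mem_range.1 hi)
  · intro j hj
    rw [joinGs_getD, joinGs_getD]
    exact hull_Us_subset Λ ps j

theorem jList_supp (ps : List (ℕ × Fin n)) (i : ℕ) :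
    suppOf ((jList Λ hacyc ps).getD i []) = Us Λ ps i := by
  unfold jList
  rw [chainList_supp, joinGs_getD]

theorem jList_length (ps : List (ℕ × Fin n)) : (jList Λ hacyc ps).length = maxh ps := by
  unfold jList
  rw [chainList_length, joinGs_length]

theorem Us_single (p : ℕ × Fin n) (i : ℕ) : Us Λ [p] i = pset Λ p i := by
  rw [Us_cons, Us_nil, Set.union_empty]

theorem principal_single (hloop : ∀ a, Λ a a = 0) {p : ℕ × Fin n} (hp : 0 < p.1) :
    IsPrincipalSeq Λ p.1 p.2 (jList Λ hacyc [p]).flatten := by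
  refine ⟨jList Λ hacyc [p], jList_segments hacyc hloop [p], ?_, hp, ?_, ?_⟩
  · rw [jList_length]
    show max p.1 0 = p.1
    omega
  · intro i hi
    rw [jList_supp, jList_supp, Us_single, Us_single]
    exact pset_succ_hull Λ hi
  · rw [jList_supp, Us_single]
    exact pset_top Λ hp

end JoinCons

section MainA
variable {n : ℕ} {Λ : Fin n → Fin n → ℕ}
  (hacyc : ∀ a : Fin n, ¬ Relation.TransGen (fun u v => Λ u v ≠ 0) a a)
  {S : List (Fin n)} {segs : List (List (Fin n))}

theorem pset_subset_supp
    (hacyc : ∀ a : Fin n, ¬ Relation.TransGen (fun u v => Λ u v ≠ 0) a a)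
    (hsegs : Segments Λ S segs) {p : ℕ × Fin n}
    (hp : JoinPair Λ segs p) :
    ∀ i, pset Λ p i ⊆ suppOf (segs.getD i []) := by
  obtain ⟨hp1, hp2, hmin⟩ := hp
  have htop : pset Λ p (p.1 - 1) ⊆ suppOf (segs.getD (p.1 - 1) []) := by
    rw [pset_top Λ hp1]
    intro w hw
    exact supp_pathLE_closed hsegs hmin.1.1 hw
  suffices h : ∀ k i, p.1 - 1 - i ≤ k → pset Λ p i ⊆ suppOf (segs.getD i []) by
    intro i
    exact h (p.1 - 1 - i) i (le_refl _)
  intro k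
  induction k with
  | zero =>
    intro i hi
    rcases Nat.lt_or_ge i p.1 with h | h
    · have : i = p.1 - 1 := by omega
      subst this
      exact htop
    · rw [pset_empty Λ h]
      exact Set.empty_subset _
  | succ k ih =>
    intro i hi
    rcases Nat.lt_or_ge (i+1) p.1 with h | h
    · rw [pset_succ_hull Λ h]
      calc hull Λ (pset Λ p (i+1)) ⊆ hull Λ (suppOf (segs.getD (i+1) [])) :=
            hull_mono Λ (ih (i+1) (by omega))
        _ ⊆ suppOf (segs.getD i []) := hull_supp_subset hsegs hacyc i
    · rcases Nat.lt_or_ge i p.1 with h' | h'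
      · have : i = p.1 - 1 := by omega
        subst this
        exact htop
      · rw [pset_empty Λ h']
        exact Set.empty_subset _

theorem main_supp_eq
    (hacyc : ∀ a : Fin n, ¬ Relation.TransGen (fun u v => Λ u v ≠ 0) a a)
    (hsegs : Segments Λ S segs) {psAll : List (ℕ × Fin n)}
    (hps : ∀ p, p ∈ psAll ↔ JoinPair Λ segs p) :
    ∀ i, suppOf (segs.getD i []) = Us Λ psAll i := by
  suffices h : ∀ k i, segs.length - i ≤ k → suppOf (segs.getD i []) = Us Λ psAll i by
    intro i
    exact h (segs.length - i) i (le_refl _)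
  intro k
  induction k with
  | zero =>
    intro i hi
    have hilen : segs.length ≤ i := by omega
    rw [List.getD_eq_default _ _ hilen]
    ext w
    simp only [mem_suppOf, List.not_mem_nil, false_iff]
    rintro ⟨p, hp, hw⟩
    obtain ⟨-, hple, -⟩ := (hps p).1 hp
    rw [pset_empty Λ (by omega : p.1 ≤ i)] at hw
    exact hw
  | succ k ih =>
    intro i hi
    rcases Nat.lt_or_ge i segs.length with hilen | hilen
    swap
    · rw [List.getD_eq_default _ _ hilen]
      ext w
      simp only [mem_suppOf, List.not_mem_nil, false_iff]
      rintro ⟨p, hp, hw⟩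
      obtain ⟨-, hple, -⟩ := (hps p).1 hp
      rw [pset_empty Λ (by omega : p.1 ≤ i)] at hw
      exact hw
    ext u
    constructor
    swap
    · rintro ⟨p, hp, hu⟩
      exact pset_subset_supp hacyc hsegs ((hps p).1 hp) i hu
    intro hu
    by_cases hB : u ∈ hull Λ (suppOf (segs.getD (i+1) []))
    · have hnext : suppOf (segs.getD (i+1) []) = Us Λ psAll (i+1) := ih (i+1) (by omega)
      rw [hnext] at hB
      exact hull_Us_subset Λ psAll i hB
    · -- u is outside the hull of the next support: find a minimal element below u
      set D := suppOf (segs.getD i []) \ hull Λ (suppOf (segs.getD (i+1) [])) with hD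
      have huD : u ∈ D := ⟨hu, hB⟩
      obtain ⟨v, hvD', hvmin⟩ := exists_minimal hacyc (D := {w | w ∈ D ∧ PathLE Λ w u})
        ⟨u, huD, pathLE_refl Λ u⟩
      have hjp : JoinPair Λ segs (i+1, v) := by
        refine ⟨by omega, by simpa using hilen, hvD'.1, ?_⟩
        intro w hw hwv
        exact hvmin w ⟨hw, pathLE_trans hwv hvD'.2⟩ hwv
      refine ⟨(i+1, v), (hps _).2 hjp, ?_⟩
      have : pset Λ (i+1, v) i = upSet Λ v := by
        have := pset_top Λ (p := (i+1, v)) (by omega)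
        simpa using this
      rw [this]
      exact hvD'.2

end MainA

section Assembly
variable {n : ℕ} {Λ : Fin n → Fin n → ℕ}

theorem jList_nil_flatten
    (hacyc : ∀ a : Fin n, ¬ Relation.TransGen (fun u v => Λ u v ≠ 0) a a) :
    (jList Λ hacyc ([] : List (ℕ × Fin n))).flatten = [] := by
  have : (jList Λ hacyc ([] : List (ℕ × Fin n))).length = 0 := by
    rw [jList_length]
    rfl
  rw [List.length_eq_zero_iff] at this
  rw [this]
  rfl

theorem isJoinList_jList
    (hacyc : ∀ a : Fin n, ¬ Relation.TransGen (fun u v => Λ u v ≠ 0) a a)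
    (hloop : ∀ a, Λ a a = 0) (ps : List (ℕ × Fin n)) :
    IsJoinList Λ (ps.map (fun p => (jList Λ hacyc [p]).flatten))
      (jList Λ hacyc ps).flatten := by
  induction ps with
  | nil =>
    show (jList Λ hacyc ([] : List (ℕ × Fin n))).flatten = []
    exact jList_nil_flatten hacyc
  | cons p ps ih =>
    refine ⟨(jList Λ hacyc ps).flatten, ih, ?_⟩
    refine ⟨jList Λ hacyc [p], jList Λ hacyc ps, jList Λ hacyc (p :: ps),
      jList_segments hacyc hloop [p], jList_segments hacyc hloop ps,
      jList_segments hacyc hloop (p :: ps), ?_⟩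
    intro i
    rw [jList_supp, jList_supp, jList_supp, Us_cons, Us_single]

theorem isJoinList_S
    (hacyc : ∀ a : Fin n, ¬ Relation.TransGen (fun u v => Λ u v ≠ 0) a a)
    (hloop : ∀ a, Λ a a = 0)
    {S : List (Fin n)} {segs : List (List (Fin n))} (hsegs : Segments Λ S segs)
    (hne : S ≠ []) {psAll : List (ℕ × Fin n)}
    (hps : ∀ p, p ∈ psAll ↔ JoinPair Λ segs p) :
    IsJoinList Λ (psAll.map (fun p => (jList Λ hacyc [p]).flatten)) S := by
  have hlen : 0 < segs.length := by
    by_contra h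
    have : segs = [] := by
      cases segs
      · rfl
      · simp at h
    subst this
    have : S.Perm [] := sim_perm hsegs.2.1
    exact hne (List.Perm.eq_nil this)
  cases psAll with
  | nil =>
    exfalso
    have h0 := main_supp_eq hacyc hsegs hps 0
    rw [Us_nil] at h0
    have hne0 : segs.getD 0 [] ≠ [] := by
      rw [List.getD_eq_getElem segs [] hlen]
      exact (hsegs.2.2.1 _ (List.getElem_mem _)).1
    obtain ⟨v, hv⟩ := List.exists_mem_of_ne_nil _ hne0
    have : v ∈ suppOf (segs.getD 0 []) := hv
    rw [h0] at this
    exact this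
  | cons p ps =>
    refine ⟨(jList Λ hacyc ps).flatten, isJoinList_jList hacyc hloop ps, ?_⟩
    refine ⟨jList Λ hacyc [p], jList Λ hacyc ps, segs,
      jList_segments hacyc hloop [p], jList_segments hacyc hloop ps, hsegs, ?_⟩
    intro i
    rw [jList_supp, jList_supp, main_supp_eq hacyc hsegs hps i, Us_cons, Us_single]

theorem isJoinList_cnt {Ts : List (List (Fin n))} {S : List (Fin n)}
    (h : IsJoinList Λ Ts S) (i : ℕ) :
    {v : Fin n | i < S.count v} = {v : Fin n | ∃ T ∈ Ts, i < T.count v} := by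
  induction Ts generalizing S with
  | nil =>
    have : S = [] := h
    subst this
    ext v
    simp
  | cons T Ts ih =>
    obtain ⟨J, hJ, CS, CT, CJ, hCS, hCT, hCJ, hsupp⟩ := h
    ext v
    have h1 := segs_suppOf_eq hCJ i
    have h2 := segs_suppOf_eq hCS i
    have h3 := segs_suppOf_eq hCT i
    have h4 := hsupp i
    rw [h1, h2, h3] at h4
    have h5 := ih hJ
    constructor
    · intro hv
      have : v ∈ ({v : Fin n | i < T.count v} ∪ {v : Fin n | i < J.count v}) := by
        rw [← h4]; exact hv
      rcases this with hv' | hv'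
      · exact ⟨T, List.mem_cons_self, hv'⟩
      · have : v ∈ {v : Fin n | ∃ T ∈ Ts, i < T.count v} := by rw [← h5]; exact hv'
        obtain ⟨T', hT', hc⟩ := this
        exact ⟨T', List.mem_cons_of_mem _ hT', hc⟩
    · rintro ⟨T', hT', hc⟩
      have : v ∈ ({v : Fin n | i < T.count v} ∪ {v : Fin n | i < J.count v}) := by
        rcases List.mem_cons.1 hT' with rfl | hmem
        · exact Or.inl hc
        · refine Or.inr ?_
          have : v ∈ {v : Fin n | ∃ T ∈ Ts, i < T.count v} := ⟨T', hmem, hc⟩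
          rw [← h5] at this
          exact this
      rw [← h4] at this
      exact this

end Assembly

section PartBC
variable {n : ℕ} {Λ : Fin n → Fin n → ℕ}

theorem part_b_lemma
    (hacyc : ∀ a : Fin n, ¬ Relation.TransGen (fun u v => Λ u v ≠ 0) a a)
    {S : List (Fin n)} {segs : List (List (Fin n))} (hsegs : Segments Λ S segs)
    (Ts : List (List (Fin n))) (hT : ∀ T ∈ Ts, IsPrincipal Λ T)
    (hjoin : IsJoinList Λ Ts S) (p : ℕ × Fin n) (hp : JoinPair Λ segs p) :
    ∃ T ∈ Ts, IsPrincipalSeq Λ p.1 p.2 T := by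
  obtain ⟨hp1, hp2, hmin⟩ := hp
  set h := p.1
  set v := p.2
  have hvA : v ∈ suppOf (segs.getD (h-1) []) := hmin.1.1
  have hvB : v ∉ hull Λ (suppOf (segs.getD h [])) := hmin.1.2
  rw [segs_suppOf_eq hsegs] at hvA
  -- find T₀ containing v at level h-1
  have hcnt := isJoinList_cnt hjoin (h-1)
  have : v ∈ {w : Fin n | ∃ T ∈ Ts, h - 1 < T.count w} := by rw [← hcnt]; exact hvA
  obtain ⟨T₀, hT₀mem, hvT₀⟩ := this
  obtain ⟨r, x, segsT, hsegsT, hlenT, hrpos, hhullT, htopT⟩ := hT T₀ hT₀mem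
  have hvT₀' : v ∈ segsT.getD (h-1) [] := (segs_mem_iff hsegsT _ v).2 hvT₀
  have hhr : h ≤ r := by
    have := segs_count_le hsegsT v
    omega
  -- the S-level-h support contains every T-level-h support
  have hsub_h : suppOf (segsT.getD h []) ⊆ suppOf (segs.getD h []) := by
    intro w hw
    rw [segs_suppOf_eq hsegsT] at hw
    rw [segs_suppOf_eq hsegs]
    have := isJoinList_cnt hjoin h
    have : w ∈ {w : Fin n | ∃ T ∈ Ts, h < T.count w} := ⟨T₀, hT₀mem, hw⟩
    rw [← isJoinList_cnt hjoin h] at this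
    exact this
  have hrh : r = h := by
    by_contra hne
    have hlt : h - 1 + 1 < r := by omega
    have := hhullT (h-1) hlt
    have hv2 : v ∈ hull Λ (suppOf (segsT.getD (h-1+1) [])) := by
      rw [← this]
      exact hvT₀'
    have : h - 1 + 1 = h := by omega
    rw [this] at hv2
    exact hvB (hull_mono Λ hsub_h hv2)
  -- the top support of T₀ is the principal filter of x
  have htop' : suppOf (segsT.getD (h-1) []) = upSet Λ x := by
    rw [← htopT, hrh]
  have hxv : PathLE Λ x v := by
    have : v ∈ upSet Λ x := by rw [← htop']; exact hvT₀'
    exact this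
  have hxD : x ∈ suppOf (segs.getD (h-1) []) \ hull Λ (suppOf (segs.getD h [])) := by
    constructor
    · have hx1 : x ∈ suppOf (segsT.getD (h-1) []) := by
        rw [htop']
        exact mem_upSet_self Λ x
      rw [segs_suppOf_eq hsegsT] at hx1
      rw [segs_suppOf_eq hsegs]
      have : x ∈ {w : Fin n | ∃ T ∈ Ts, h - 1 < T.count w} := ⟨T₀, hT₀mem, hx1⟩
      rw [← isJoinList_cnt hjoin (h-1)] at this
      exact this
    · intro hx2
      exact hvB (hull_up_closed hx2 hxv)
  have hxeq : x = v := hmin.2 x hxD hxv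
  refine ⟨T₀, hT₀mem, segsT, hsegsT, ?_⟩
  rw [← hxeq]
  exact ⟨by omega, by omega, fun i hi => hhullT i (by omega), by rw [← htopT, hrh]⟩

theorem principal_supp {h : ℕ} {v : Fin n} {T : List (Fin n)}
    (hp : IsPrincipalSeq Λ h v T) :
    ∀ i, {w : Fin n | i < T.count w} = pset Λ (h, v) i := by
  obtain ⟨segs, hsegs, hlen, hpos, hhull, htop⟩ := hp
  have key : ∀ k i, h - 1 - i ≤ k → suppOf (segs.getD i []) = pset Λ (h, v) i := by
    intro k
    induction k with
    | zero =>
      intro i hi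
      rcases Nat.lt_or_ge i h with hlt | hge
      · have : i = h - 1 := by omega
        subst this
        rw [htop, pset_top Λ (p := (h, v)) hpos]
      · rw [pset_empty Λ hge, List.getD_eq_default _ _ (by omega)]
        ext w
        simp [suppOf]
    | succ k ih =>
      intro i hi
      rcases Nat.lt_or_ge (i+1) h with hlt | hge
      · rw [hhull i (by omega), ih (i+1) (by omega), pset_succ_hull Λ (p := (h, v)) hlt]
      · rcases Nat.lt_or_ge i h with hlt' | hge'
        · have : i = h - 1 := by omega
          subst this
          rw [htop, pset_top Λ (p := (h, v)) hpos]
        · rw [pset_empty Λ hge', List.getD_eq_default _ _ (by omega)]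
          ext w
          simp [suppOf]
  intro i
  rw [← key (h - 1 - i) i (le_refl _), segs_suppOf_eq hsegs]

theorem principal_count_eq {h : ℕ} {v : Fin n} {T U : List (Fin n)}
    (hpT : IsPrincipalSeq Λ h v T) (hpU : IsPrincipalSeq Λ h v U) (w : Fin n) :
    T.count w = U.count w := by
  have h1 := principal_supp hpT
  have h2 := principal_supp hpU
  have kT : ∀ i, i < T.count w ↔ i < U.count w := by
    intro i
    constructor
    · intro hc
      have : w ∈ pset Λ (h, v) i := by rw [← h1 i]; exact hc
      rw [← h2 i] at this
      exact this
    · intro hc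
      have : w ∈ pset Λ (h, v) i := by rw [← h2 i]; exact hc
      rw [← h1 i] at this
      exact this
  have := kT (T.count w)
  have := kT (U.count w)
  omega

theorem principal_sim {h : ℕ} {v : Fin n} {T U : List (Fin n)}
    (hpT : IsPrincipalSeq Λ h v T) (hpU : IsPrincipalSeq Λ h v U) :
    Sim (edges Λ) T U := by
  obtain ⟨segsT, hsegsT, -⟩ := id hpT
  obtain ⟨segsU, hsegsU, -⟩ := id hpU
  have hadmT : Admissible Λ T := adm_of_sim (sim_symm hsegsT.2.1) hsegsT.1
  have hadmU : Admissible Λ U := adm_of_sim (sim_symm hsegsU.2.1) hsegsU.1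
  exact sim_of_counts T hadmT hadmU (principal_count_eq hpT hpU)

theorem principal_params_unique
    (hacyc : ∀ a : Fin n, ¬ Relation.TransGen (fun u v => Λ u v ≠ 0) a a)
    {T : List (Fin n)} {r r' : ℕ} {x x' : Fin n}
    (hp : IsPrincipalSeq Λ r x T) (hp' : IsPrincipalSeq Λ r' x' T) :
    r = r' ∧ x = x' := by
  obtain ⟨segs, hsegs, hlen, hpos, hhull, htop⟩ := hp
  obtain ⟨segs', hsegs', hlen', hpos', hhull', htop'⟩ := hp'
  have hr : r = r' := by
    rw [← hlen, ← hlen']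
    exact segs_length_eq hsegs hsegs'
  refine ⟨hr, ?_⟩
  have hsupp : upSet Λ x = upSet Λ x' := by
    rw [← htop, ← htop', ← hr, segs_suppOf_eq hsegs, segs_suppOf_eq hsegs']
  have h1 : x' ∈ upSet Λ x := by rw [hsupp]; exact mem_upSet_self Λ x'
  have h2 : x ∈ upSet Λ x' := by rw [← hsupp]; exact mem_upSet_self Λ x
  exact pathLE_antisymm hacyc h1 h2

end PartBC

theorem join_of_principal_sequences
    (n : ℕ) (hn : 2 ≤ n) (Λ : Fin n → Fin n → ℕ)
    (hloop : ∀ a, Λ a a = 0)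
    (hconn : ∀ a b : Fin n, Relation.ReflTransGen (fun u v => edges Λ u v ≠ 0) a b)
    (hacyc : ∀ a : Fin n, ¬ Relation.TransGen (fun u v => Λ u v ≠ 0) a a)
    (S : List (Fin n)) (hS : Admissible Λ S) (hne : S ≠ [])
    (segs : List (List (Fin n))) (hsegs : Segments Λ S segs) :
    (∃ (ps : List (ℕ × Fin n)) (F : ℕ × Fin n → List (Fin n)),
      ps.Nodup ∧ (∀ p, p ∈ ps ↔ JoinPair Λ segs p) ∧
      (∀ p ∈ ps, IsPrincipalSeq Λ p.1 p.2 (F p)) ∧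
      IsJoinList Λ (ps.map F) S) ∧
    (∀ Ts : List (List (Fin n)), (∀ T ∈ Ts, IsPrincipal Λ T) → IsJoinList Λ Ts S →
      ∀ p : ℕ × Fin n, JoinPair Λ segs p → ∃ T ∈ Ts, IsPrincipalSeq Λ p.1 p.2 T) ∧
    ((∃ Ts : List (List (Fin n)), (∀ T ∈ Ts, IsPrincipal Λ T) ∧ IsJoinList Λ Ts S) ∧
      ∀ (l : ℕ) (Ts Us : List (List (Fin n))) (hTl : Ts.length = l) (hUl : Us.length = l),
        (∀ T ∈ Ts, IsPrincipal Λ T) → (∀ U ∈ Us, IsPrincipal Λ U) →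
        IsJoinList Λ Ts S → IsJoinList Λ Us S →
        (∀ Ts' : List (List (Fin n)), (∀ T ∈ Ts', IsPrincipal Λ T) → IsJoinList Λ Ts' S →
          l ≤ Ts'.length) →
        ∃ σ : Equiv.Perm (Fin l), ∀ i : Fin l,
          Sim (edges Λ) (Ts.get (Fin.cast hTl.symm i)) (Us.get (Fin.cast hUl.symm (σ i)))) := by
  classical
  set F : ℕ × Fin n → List (Fin n) := fun p => (jList Λ hacyc [p]).flatten with hF
  set P : Finset (ℕ × Fin n) :=
    ((Finset.range (segs.length + 1)) ×ˢ (Finset.univ : Finset (Fin n))).filter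
      (fun p => JoinPair Λ segs p) with hP
  have hPmem : ∀ p, p ∈ P ↔ JoinPair Λ segs p := by
    intro p
    rw [hP, Finset.mem_filter, Finset.mem_product, Finset.mem_range]
    constructor
    · tauto
    · intro hp
      exact ⟨⟨by have := hp.2.1; omega, Finset.mem_univ _⟩, hp⟩
  set psAll : List (ℕ × Fin n) := P.toList with hpsAll
  have hpsmem : ∀ p, p ∈ psAll ↔ JoinPair Λ segs p := by
    intro p
    rw [hpsAll, Finset.mem_toList]
    exact hPmem p
  have hprin : ∀ p ∈ psAll, IsPrincipalSeq Λ p.1 p.2 (F p) := by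
    intro p hp
    exact principal_single hacyc hloop ((hpsmem p).1 hp).1
  have hjoinA : IsJoinList Λ (psAll.map F) S := isJoinList_S hacyc hloop hsegs hne hpsmem
  have hprinF : ∀ T ∈ psAll.map F, IsPrincipal Λ T := by
    intro T hT
    obtain ⟨p, hp, rfl⟩ := List.mem_map.1 hT
    exact ⟨p.1, p.2, hprin p hp⟩
  refine ⟨⟨psAll, F, P.nodup_toList, hpsmem, hprin, hjoinA⟩, ?_, ?_⟩
  · intro Ts hTs hjoin p hp
    exact part_b_lemma hacyc hsegs Ts hTs hjoin p hp
  refine ⟨⟨psAll.map F, hprinF, hjoinA⟩, ?_⟩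
  intro l Ts Us hTl hUl hTsP hUsP hTsJ hUsJ hmin
  have hlle : l ≤ P.card := by
    have := hmin (psAll.map F) hprinF hjoinA
    rwa [List.length_map, hpsAll, Finset.length_toList] at this
  have hchT : ∀ p : {q // q ∈ P}, ∃ i : Fin l,
      IsPrincipalSeq Λ p.1.1 p.1.2 (Ts.get (Fin.cast hTl.symm i)) := by
    intro p
    obtain ⟨T, hTmem, hTp⟩ := part_b_lemma hacyc hsegs Ts hTsP hTsJ p.1 ((hPmem p.1).1 p.2)
    obtain ⟨j, hj⟩ := List.mem_iff_get.1 hTmem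
    refine ⟨Fin.cast hTl j, ?_⟩
    show IsPrincipalSeq Λ p.1.1 p.1.2 (Ts.get j)
    rw [hj]
    exact hTp
  have hchU : ∀ p : {q // q ∈ P}, ∃ i : Fin l,
      IsPrincipalSeq Λ p.1.1 p.1.2 (Us.get (Fin.cast hUl.symm i)) := by
    intro p
    obtain ⟨T, hTmem, hTp⟩ := part_b_lemma hacyc hsegs Us hUsP hUsJ p.1 ((hPmem p.1).1 p.2)
    obtain ⟨j, hj⟩ := List.mem_iff_get.1 hTmem
    refine ⟨Fin.cast hUl j, ?_⟩
    show IsPrincipalSeq Λ p.1.1 p.1.2 (Us.get j)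
    rw [hj]
    exact hTp
  choose fT hfT using hchT
  choose fU hfU using hchU
  have hinjT : Function.Injective fT := by
    intro p q hpq
    have h1 := hfT p
    have h2 := hfT q
    rw [hpq] at h1
    obtain ⟨hr, hx⟩ := principal_params_unique hacyc h1 h2
    exact Subtype.ext (Prod.ext hr hx)
  have hcardP : Fintype.card {q // q ∈ P} = P.card := Fintype.card_coe P
  have hcard : Fintype.card {q // q ∈ P} = l := by
    have hle1 : Fintype.card {q // q ∈ P} ≤ l := by
      have := Fintype.card_le_of_injective fT hinjT
      rwa [Fintype.card_fin] at this
    omega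
  have hbijT : Function.Bijective fT :=
    (Fintype.bijective_iff_injective_and_card fT).2 ⟨hinjT, by rw [hcard, Fintype.card_fin]⟩
  have hinjU : Function.Injective fU := by
    intro p q hpq
    have h1 := hfU p
    have h2 := hfU q
    rw [hpq] at h1
    obtain ⟨hr, hx⟩ := principal_params_unique hacyc h1 h2
    exact Subtype.ext (Prod.ext hr hx)
  have hbijU : Function.Bijective fU :=
    (Fintype.bijective_iff_injective_and_card fU).2 ⟨hinjU, by rw [hcard, Fintype.card_fin]⟩
  set eT := Equiv.ofBijective fT hbijT with heT
  set eU := Equiv.ofBijective fU hbijU with heU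
  refine ⟨eT.symm.trans eU, ?_⟩
  intro i
  have h1 := hfT (eT.symm i)
  have h2 := hfU (eT.symm i)
  have hfix : fT (eT.symm i) = i := eT.apply_symm_apply i
  rw [hfix] at h1
  have hσ : (eT.symm.trans eU) i = fU (eT.symm i) := rfl
  rw [hσ]
  exact principal_sim h1 h2

end KP
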